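/- arXiv:1303.3236 — 8 statements merged into one kernel-verified Lean document; each statement's English description precedes it below -/
import Mathlib

section
/- Let A_n denote the number of quarter-plane walks of length n with steps from 𝒜 = {(−1,1),(1,1),(1,−1)}. Then there exist a real constant κ > 0 and a constant C > 0 such that for all n ≥ 0, |A_n − κ·3^n| ≤ C·(2√2)^n. -/
/-- The number of quarter-plane walks of length `n` with steps from `S`:
sequences of `n` steps, each in `S`, all of whose partial sums have both
coordinates nonnegative. -/
noncomputable def quarterPlaneWalks (S : Finset (ℤ × ℤ)) (n : ℕ) : ℕ :=
  Nat.card {f : Fin n → ℤ × ℤ //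
    (∀ k, f k ∈ S) ∧
    ∀ k : Fin n, 0 ≤ ∑ j ∈ Finset.Iic k, (f j).1 ∧ 0 ≤ ∑ j ∈ Finset.Iic k, (f j).2}

abbrev Stp := ℤ × ℤ

def SA : Finset Stp := {(-1,1),(1,1),(1,-1)}

def gsum (g : Stp → ℤ) (w : List Stp) : ℤ := (w.map g).sum

def sur : ℤ → ℤ → List Stp → Prop
  | _, _, [] => True
  | x, y, s :: t => 0 ≤ x + s.1 ∧ 0 ≤ y + s.2 ∧ sur (x + s.1) (y + s.2) t

instance sur.dec : ∀ (x y : ℤ) (w : List Stp), Decidable (sur x y w)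
  | _, _, [] => .isTrue trivial
  | x, y, s :: t =>
    letI := sur.dec (x + s.1) (y + s.2) t
    decidable_of_iff (0 ≤ x + s.1 ∧ 0 ≤ y + s.2 ∧ sur (x + s.1) (y + s.2) t) Iff.rfl

def hits (g : Stp → ℤ) : ℤ → List Stp → Prop
  | x, [] => x < 0
  | x, s :: t => x < 0 ∨ hits g (x + g s) t

instance hits.dec (g : Stp → ℤ) : ∀ (x : ℤ) (w : List Stp), Decidable (hits g x w)
  | _, [] => inferInstanceAs (Decidable (_ < 0))
  | x, s :: t =>
    letI := hits.dec g (x + g s) t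
    decidable_of_iff (x < 0 ∨ hits g (x + g s) t) Iff.rfl

def seqs : ℕ → Finset (List Stp)
  | 0 => {[]}
  | n + 1 => (SA ×ˢ seqs n).image (fun p => p.1 :: p.2)

def Wk (x y : ℤ) (n : ℕ) : Finset (List Stp) := (seqs n).filter (sur x y)

def bad (g : Stp → ℤ) (x : ℤ) (m : ℕ) : ℕ := ((seqs m).filter (hits g x)).card

lemma card_seqs (n : ℕ) : (seqs n).card = 3 ^ n := by
  induction n with
  | zero => rfl
  | succ n ih =>
    rw [seqs, Finset.card_image_of_injective _ (fun p q h => by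
      cases p; cases q; simpa using h), Finset.card_product, ih]
    have : SA.card = 3 := rfl
    rw [this, pow_succ]; ring

lemma seqs_succ (n : ℕ) :
    seqs (n + 1) = SA.biUnion (fun s => (seqs n).image (fun t => s :: t)) := by
  ext w
  simp [seqs, Finset.mem_biUnion, Finset.mem_image, Finset.mem_product]
  tauto

lemma mem_seqs {n : ℕ} {w : List Stp} :
    w ∈ seqs n ↔ w.length = n ∧ ∀ s ∈ w, s ∈ SA := by
  induction n generalizing w with
  | zero =>
    simp only [seqs, Finset.mem_singleton, List.length_eq_zero_iff]
    constructor
    · rintro rfl; simp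
    · rintro ⟨rfl, -⟩; rfl
  | succ n ih =>
    rw [seqs_succ]
    simp only [Finset.mem_biUnion, Finset.mem_image]
    constructor
    · rintro ⟨s, hs, t, ht, rfl⟩
      obtain ⟨hl, he⟩ := ih.1 ht
      refine ⟨by simp [hl], ?_⟩
      intro a ha
      rcases List.mem_cons.1 ha with rfl | ha
      · exact hs
      · exact he a ha
    · rintro ⟨hl, he⟩
      cases w with
      | nil => simp at hl
      | cons s t =>
        exact ⟨s, he s (by simp), t, ih.2 ⟨by simpa using hl,
          fun a ha => he a (List.mem_cons_of_mem _ ha)⟩, rfl⟩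

lemma hits_of_neg (g : Stp → ℤ) {x : ℤ} (hx : x < 0) (w : List Stp) : hits g x w := by
  cases w with
  | nil => exact hx
  | cons s t => exact Or.inl hx

lemma bad_succ (g : Stp → ℤ) {x : ℤ} (hx : 0 ≤ x) (m : ℕ) :
    bad g x (m + 1) = ∑ s ∈ SA, bad g (x + g s) m := by
  unfold bad
  rw [seqs_succ, Finset.filter_biUnion, Finset.card_biUnion]
  · refine Finset.sum_congr rfl fun s _ => ?_
    rw [Finset.filter_image,
      Finset.card_image_of_injective _ (fun a b h => by simpa using h)]
    congr 1
    ext t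
    simp only [Finset.mem_filter, and_congr_right_iff]
    intro _
    show hits g x (s :: t) ↔ hits g (x + g s) t
    constructor
    · rintro (h | h)
      · omega
      · exact h
    · exact Or.inr
  · intro a _ b _ hab
    simp only [Finset.disjoint_left, Finset.mem_filter, Finset.mem_image]
    rintro w ⟨⟨t, _, rfl⟩, -⟩ ⟨⟨t', _, h⟩, -⟩
    exact hab (by injection h with h1 _; exact h1.symm ▸ rfl)

lemma bad_le_card (g : Stp → ℤ) (x : ℤ) (m : ℕ) : bad g x m ≤ 3 ^ m := by
  rw [← card_seqs m]; exact Finset.card_filter_le _ _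

lemma sum_fst {M : Type*} [AddCommMonoid M] (F : ℤ → M) :
    ∑ s ∈ SA, F s.1 = F (-1) + (F 1 + F 1) := by
  rw [SA, Finset.sum_insert (by decide), Finset.sum_insert (by decide),
    Finset.sum_singleton]

lemma sum_snd {M : Type*} [AddCommMonoid M] (F : ℤ → M) :
    ∑ s ∈ SA, F s.2 = F (-1) + (F 1 + F 1) := by
  rw [SA, Finset.sum_insert (by decide), Finset.sum_insert (by decide),
    Finset.sum_singleton]
  show F 1 + (F 1 + F (-1)) = _
  abel

lemma bad_le (g : Stp → ℤ)
    (hsum : ∀ F : ℤ → ℕ, ∑ s ∈ SA, F (g s) = F (-1) + (F 1 + F 1)) :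
    ∀ (m : ℕ) (x : ℤ), 2 ^ (x + 1).toNat * bad g x m ≤ 3 ^ m := by
  intro m
  induction m with
  | zero =>
    intro x
    rcases lt_or_ge x 0 with hx | hx
    · have h0 : (x + 1).toNat = 0 := by omega
      have : bad g x 0 ≤ 3 ^ 0 := bad_le_card g x 0
      simpa [h0] using this
    · have : bad g x 0 = 0 := by
        unfold bad
        rw [Finset.card_eq_zero]
        ext w
        simp only [Finset.mem_filter, Finset.notMem_empty, iff_false]
        rintro ⟨hw, hh⟩
        have : w = [] := by simpa [seqs] using hw
        subst this
        exact absurd hh (by simpa [hits] using hx)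
      simp [this]
  | succ m ih =>
    intro x
    rcases lt_or_ge x 0 with hx | hx
    · have h0 : (x + 1).toNat = 0 := by omega
      have := bad_le_card g x (m + 1)
      simpa [h0] using this
    · rw [bad_succ g hx, hsum (fun z => bad g (x + z) m)]
      have h1 := ih (x + -1)
      have h2 := ih (x + 1)
      have e1 : (x + -1 + 1).toNat = x.toNat := by omega
      have e2 : (x + 1 + 1).toNat = x.toNat + 2 := by omega
      have e3 : (x + 1).toNat = x.toNat + 1 := by omega
      rw [e1] at h1; rw [e2] at h2; rw [e3]
      set k := x.toNat
      set b1 := bad g (x + -1) m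
      set b2 := bad g (x + 1) m
      have : 2 ^ (k + 1) * (b1 + (b2 + b2)) = 2 * (2 ^ k * b1) + 2 ^ (k + 2) * b2 := by
        ring
      rw [this, pow_succ]
      calc 2 * (2 ^ k * b1) + 2 ^ (k + 2) * b2 ≤ 2 * 3 ^ m + 3 ^ m := by
            have := Nat.mul_le_mul_left 2 h1
            omega
        _ = 3 ^ m * 3 := by ring

lemma gsum_nil (g : Stp → ℤ) : gsum g [] = 0 := rfl

lemma gsum_cons (g : Stp → ℤ) (s : Stp) (t : List Stp) :
    gsum g (s :: t) = g s + gsum g t := by simp [gsum]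

lemma sur_append : ∀ (u v : List Stp) (x y : ℤ),
    sur x y (u ++ v) ↔
      sur x y u ∧ sur (x + gsum Prod.fst u) (y + gsum Prod.snd u) v := by
  intro u
  induction u with
  | nil => intro v x y; simp [sur, gsum]
  | cons s t ih =>
    intro v x y
    show (0 ≤ x + s.1 ∧ 0 ≤ y + s.2 ∧ sur (x + s.1) (y + s.2) (t ++ v)) ↔ _
    rw [ih]
    have e1 : x + s.1 + gsum Prod.fst t = x + gsum Prod.fst (s :: t) := by
      rw [gsum_cons]; ring
    have e2 : y + s.2 + gsum Prod.snd t = y + gsum Prod.snd (s :: t) := by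
      rw [gsum_cons]; ring
    rw [e1, e2]
    show _ ↔ (0 ≤ x + s.1 ∧ 0 ≤ y + s.2 ∧ sur (x + s.1) (y + s.2) t) ∧ _
    tauto

lemma append_mem_seqs {n m : ℕ} {u v : List Stp} (hu : u ∈ seqs n) (hv : v ∈ seqs m) :
    u ++ v ∈ seqs (n + m) := by
  rw [mem_seqs] at *
  refine ⟨by simp [hu.1, hv.1], ?_⟩
  intro s hs
  rcases List.mem_append.1 hs with h | h
  · exact hu.2 s h
  · exact hv.2 s h

lemma card_Wk_add (x y : ℤ) (n m : ℕ) :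
    (Wk x y (n + m)).card =
      ∑ u ∈ Wk x y n, (Wk (x + gsum Prod.fst u) (y + gsum Prod.snd u) m).card := by
  have hset : Wk x y (n + m) =
      (Wk x y n).biUnion (fun u =>
        (Wk (x + gsum Prod.fst u) (y + gsum Prod.snd u) m).image (fun v => u ++ v)) := by
    ext w
    simp only [Finset.mem_biUnion, Finset.mem_image, Wk, Finset.mem_filter]
    constructor
    · rintro ⟨hw, hs⟩
      obtain ⟨hl, he⟩ := mem_seqs.1 hw
      have hsplit := (sur_append (w.take n) (w.drop n) x y).1
        (by rw [List.take_append_drop]; exact hs)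
      refine ⟨w.take n, ⟨mem_seqs.2 ⟨by rw [List.length_take, hl]; omega,
          fun s hs' => he s (List.mem_of_mem_take hs')⟩, hsplit.1⟩,
        w.drop n, ⟨⟨mem_seqs.2 ⟨by rw [List.length_drop, hl]; omega,
          fun s hs' => he s (List.mem_of_mem_drop hs')⟩, hsplit.2⟩,
        by simp⟩⟩
    · rintro ⟨u, ⟨⟨hu, hsu⟩, v, ⟨⟨hv, hsv⟩, rfl⟩⟩⟩
      exact ⟨append_mem_seqs hu hv, (sur_append _ _ _ _).2 ⟨hsu, hsv⟩⟩
  rw [hset, Finset.card_biUnion]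
  · refine Finset.sum_congr rfl fun u _ => ?_
    exact Finset.card_image_of_injective _ (fun a b h => List.append_cancel_left h)
  · intro u hu u' hu' hne
    simp only [Finset.disjoint_left, Finset.mem_image]
    rintro w ⟨v, _, rfl⟩ ⟨v', _, h⟩
    have lu : u.length = n := (mem_seqs.1 (Finset.mem_filter.1 hu).1).1
    have lu' : u'.length = n := (mem_seqs.1 (Finset.mem_filter.1 hu').1).1
    exact hne ((List.append_inj h (by omega)).1.symm)

lemma not_sur : ∀ (v : List Stp) (x y : ℤ), ¬ sur x y v →
    hits Prod.fst x v ∨ hits Prod.snd y v := by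
  intro v
  induction v with
  | nil => intro x y h; exact absurd trivial h
  | cons s t ih =>
    intro x y h
    by_cases h1 : 0 ≤ x + s.1
    · by_cases h2 : 0 ≤ y + s.2
      · have h3 : ¬ sur (x + s.1) (y + s.2) t := fun hs => h ⟨h1, h2, hs⟩
        rcases ih _ _ h3 with hh | hh
        · exact Or.inl (Or.inr hh)
        · exact Or.inr (Or.inr hh)
      · exact Or.inr (Or.inr (hits_of_neg _ (by omega) t))
    · exact Or.inl (Or.inr (hits_of_neg _ (by omega) t))

lemma card_compl (x y : ℤ) (m : ℕ) :
    3 ^ m ≤ (Wk x y m).card + (bad Prod.fst x m + bad Prod.snd y m) := by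
  classical
  have hsplit := Finset.card_filter_add_card_filter_not
    (s := seqs m) (p := sur x y)
  have hsub : (seqs m).filter (fun v => ¬ sur x y v) ⊆
      ((seqs m).filter (hits Prod.fst x)) ∪ ((seqs m).filter (hits Prod.snd y)) := by
    intro v hv
    rw [Finset.mem_filter] at hv
    rcases not_sur v x y hv.2 with hh | hh
    · exact Finset.mem_union_left _ (Finset.mem_filter.2 ⟨hv.1, hh⟩)
    · exact Finset.mem_union_right _ (Finset.mem_filter.2 ⟨hv.1, hh⟩)
  have h2 : ((seqs m).filter (fun v => ¬ sur x y v)).card ≤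
      bad Prod.fst x m + bad Prod.snd y m :=
    le_trans (Finset.card_le_card hsub) (Finset.card_union_le _ _)
  have h3 : (Wk x y m).card + ((seqs m).filter (fun v => ¬ sur x y v)).card = 3 ^ m := by
    rw [← card_seqs m, ← hsplit]
    congr 1
  omega

noncomputable def rr : ℝ := Real.sqrt 2

lemma rr_pos : 0 < rr := Real.sqrt_pos.2 (by norm_num)

lemma rr_sq : rr * rr = 2 := Real.mul_self_sqrt (by norm_num)

lemma rr_ne : rr ≠ 0 := ne_of_gt rr_pos

lemma one_le_rr : 1 ≤ rr := by
  nlinarith [rr_sq, rr_pos]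

lemma cons_pairwise_disjoint (n : ℕ) :
    (SA : Set Stp).PairwiseDisjoint (fun s => (seqs n).image (fun t => s :: t)) := by
  intro a _ b _ hab
  simp only [Function.onFun, Finset.disjoint_left, Finset.mem_image]
  rintro w ⟨t, _, rfl⟩ ⟨t', _, h⟩
  exact hab (by injection h with h1 _; exact h1.symm ▸ rfl)

lemma wsum (g : Stp → ℤ)
    (hsum : ∀ F : ℤ → ℝ, ∑ s ∈ SA, F (g s) = F (-1) + (F 1 + F 1)) (n : ℕ) :
    ∑ v ∈ seqs n, rr ^ (-(gsum g v)) = (2 * rr) ^ n := by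
  induction n with
  | zero => simp [seqs, gsum]
  | succ n ih =>
    rw [seqs_succ, Finset.sum_biUnion (cons_pairwise_disjoint n)]
    have step : ∀ s : Stp, ∑ v ∈ (seqs n).image (fun t => s :: t), rr ^ (-(gsum g v)) =
        rr ^ (-(g s)) * (2 * rr) ^ n := by
      intro s
      rw [Finset.sum_image (fun a _ b _ h => by simpa using h)]
      rw [← ih, Finset.mul_sum]
      refine Finset.sum_congr rfl fun t _ => ?_
      rw [gsum_cons, neg_add, zpow_add₀ rr_ne]
    simp only [step]
    rw [← Finset.sum_mul, hsum (fun z => rr ^ (-z))]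
    have h1 : rr ^ (-(-1) : ℤ) = rr := by norm_num
    have h2 : rr ^ (-(1:ℤ)) = rr⁻¹ := by norm_num
    rw [h1, h2]
    have : rr + (rr⁻¹ + rr⁻¹) = 2 * rr := by
      have h := rr_sq
      have hp := rr_pos
      field_simp
      nlinarith [h, hp]
    rw [this, pow_succ]
    ring

lemma sur_end : ∀ (w : List Stp) (x y : ℤ), 0 ≤ x → 0 ≤ y → sur x y w →
    0 ≤ x + gsum Prod.fst w ∧ 0 ≤ y + gsum Prod.snd w := by
  intro w
  induction w with
  | nil => intro x y hx hy _; simp [gsum_nil]; omega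
  | cons s t ih =>
    rintro x y hx hy ⟨h1, h2, h3⟩
    have := ih _ _ h1 h2 h3
    rw [gsum_cons, gsum_cons]
    constructor <;> [have := this.1; have := this.2] <;> omega

lemma rr_le_two : rr ≤ 2 := by nlinarith [rr_sq, rr_pos]

lemma bad_real_le (g : Stp → ℤ)
    (hsum : ∀ F : ℤ → ℕ, ∑ s ∈ SA, F (g s) = F (-1) + (F 1 + F 1))
    (m : ℕ) {x : ℤ} (hx : 0 ≤ x) :
    (bad g x m : ℝ) ≤ 3 ^ m * (rr ^ (-x) / 2) := by
  have key : ((2 : ℕ) ^ (x + 1).toNat * bad g x m : ℕ) ≤ 3 ^ m := bad_le g hsum m x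
  have keyR : (2 : ℝ) ^ (x + 1).toNat * (bad g x m : ℝ) ≤ 3 ^ m := by
    exact_mod_cast key
  have e3 : (x + 1).toNat = x.toNat + 1 := by omega
  rw [e3] at keyR
  have hrpow : rr ^ x.toNat ≤ 2 ^ x.toNat := pow_le_pow_left₀ (le_of_lt rr_pos) rr_le_two _
  have hzpow : rr ^ (-x) = (rr ^ x.toNat)⁻¹ := by
    rw [← zpow_natCast rr x.toNat, ← zpow_neg]
    congr 1
    omega
  have hrrpos : (0 : ℝ) < rr ^ x.toNat := pow_pos rr_pos _
  have h2pos : (0 : ℝ) < 2 ^ (x.toNat + 1) := by positivity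
  have hb : (bad g x m : ℝ) ≤ 3 ^ m / 2 ^ (x.toNat + 1) := by
    rw [le_div_iff₀ h2pos]
    linarith [keyR]
  refine le_trans hb ?_
  rw [hzpow, pow_succ]
  rw [div_le_iff₀ (by positivity)]
  have h3m : (0 : ℝ) ≤ 3 ^ m := by positivity
  have : (3:ℝ) ^ m * ((rr ^ x.toNat)⁻¹ / 2) * (2 ^ x.toNat * 2)
      = 3 ^ m * (2 ^ x.toNat / rr ^ x.toNat) := by
    field_simp
  rw [this]
  have : (1:ℝ) ≤ 2 ^ x.toNat / rr ^ x.toNat := by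
    rw [le_div_iff₀ hrrpos]; linarith
  nlinarith

def A (n : ℕ) : ℕ := (Wk 0 0 n).card

lemma M2 (n m : ℕ) : A (n + m) ≤ A n * 3 ^ m := by
  rw [A, card_Wk_add]
  calc ∑ u ∈ Wk 0 0 n, (Wk (0 + gsum Prod.fst u) (0 + gsum Prod.snd u) m).card
      ≤ ∑ _u ∈ Wk 0 0 n, 3 ^ m :=
        Finset.sum_le_sum fun u _ => by
          rw [← card_seqs m]; exact Finset.card_filter_le _ _
    _ = A n * 3 ^ m := by rw [Finset.sum_const, smul_eq_mul]; rfl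

lemma M1 (n m : ℕ) : (A n : ℝ) * 3 ^ m ≤ (A (n + m) : ℝ) + 3 ^ m * (2 * rr) ^ n := by
  have hA : (A (n + m) : ℝ) =
      ∑ u ∈ Wk 0 0 n, ((Wk (0 + gsum Prod.fst u) (0 + gsum Prod.snd u) m).card : ℝ) := by
    rw [A, card_Wk_add]; push_cast; ring
  have per : ∀ u ∈ Wk 0 0 n, (3:ℝ) ^ m ≤
      ((Wk (0 + gsum Prod.fst u) (0 + gsum Prod.snd u) m).card : ℝ)
        + 3 ^ m * (rr ^ (-(gsum Prod.fst u)) / 2)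
        + 3 ^ m * (rr ^ (-(gsum Prod.snd u)) / 2) := by
    intro u hu
    have hsur : sur 0 0 u := (Finset.mem_filter.1 hu).2
    have hend := sur_end u 0 0 le_rfl le_rfl hsur
    have hx : 0 ≤ gsum Prod.fst u := by have := hend.1; omega
    have hy : 0 ≤ gsum Prod.snd u := by have := hend.2; omega
    have hc := card_compl (0 + gsum Prod.fst u) (0 + gsum Prod.snd u) m
    have hcR : (3:ℝ) ^ m ≤ ((Wk (0 + gsum Prod.fst u) (0 + gsum Prod.snd u) m).card : ℝ)
        + ((bad Prod.fst (0 + gsum Prod.fst u) m : ℝ) + (bad Prod.snd (0 + gsum Prod.snd u) m : ℝ)) := by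
      exact_mod_cast hc
    have hb1 := bad_real_le Prod.fst (fun F => sum_fst F) m (x := 0 + gsum Prod.fst u) (by omega)
    have hb2 := bad_real_le Prod.snd (fun F => sum_snd F) m (x := 0 + gsum Prod.snd u) (by omega)
    simp only [zero_add] at hcR hb1 hb2 ⊢
    linarith
  have sum_per := Finset.sum_le_sum per
  rw [Finset.sum_const, nsmul_eq_mul] at sum_per
  have split : ∑ u ∈ Wk 0 0 n,
      (((Wk (0 + gsum Prod.fst u) (0 + gsum Prod.snd u) m).card : ℝ)
        + 3 ^ m * (rr ^ (-(gsum Prod.fst u)) / 2)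
        + 3 ^ m * (rr ^ (-(gsum Prod.snd u)) / 2))
      = (A (n+m) : ℝ) + (3^m/2) * (∑ u ∈ Wk 0 0 n, rr ^ (-(gsum Prod.fst u)))
        + (3^m/2) * (∑ u ∈ Wk 0 0 n, rr ^ (-(gsum Prod.snd u))) := by
    rw [Finset.sum_add_distrib, Finset.sum_add_distrib, hA, Finset.mul_sum, Finset.mul_sum]
    congr 1
    · congr 1
      refine Finset.sum_congr rfl fun u _ => by ring
    · refine Finset.sum_congr rfl fun u _ => by ring
  have bound : ∀ g (hsum : ∀ F : ℤ → ℝ, ∑ s ∈ SA, F (g s) = F (-1) + (F 1 + F 1)),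
      ∑ u ∈ Wk 0 0 n, rr ^ (-(gsum g u)) ≤ (2 * rr) ^ n := by
    intro g hs
    rw [← wsum g hs n]
    refine Finset.sum_le_sum_of_subset_of_nonneg (Finset.filter_subset _ _) ?_
    intro v _ _
    exact le_of_lt (zpow_pos rr_pos _)
  have b1 := bound Prod.fst (fun F => sum_fst F)
  have b2 := bound Prod.snd (fun F => sum_snd F)
  have h3m : (0:ℝ) ≤ (3:ℝ)^m := by positivity
  have hAn : ((Wk 0 0 n).card : ℝ) = (A n : ℝ) := rfl
  rw [split, hAn] at sum_per
  nlinarith [sum_per, b1, b2, h3m]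

lemma M3 (m : ℕ) : ((3:ℝ)/4) * 3 ^ m ≤ (A (2 + m) : ℝ) := by
  have hsub : (Wk 2 2 m).image (fun v => [((1:ℤ),(1:ℤ)), (1,1)] ++ v) ⊆ Wk 0 0 (2 + m) := by
    intro w hw
    rw [Finset.mem_image] at hw
    obtain ⟨v, hv, rfl⟩ := hw
    rw [Wk, Finset.mem_filter] at hv ⊢
    constructor
    · exact append_mem_seqs (by decide) hv.1
    · rw [sur_append]
      refine ⟨by decide, ?_⟩
      have e1 : (0:ℤ) + gsum Prod.fst [((1:ℤ),(1:ℤ)), (1,1)] = 2 := by decide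
      have e2 : (0:ℤ) + gsum Prod.snd [((1:ℤ),(1:ℤ)), (1,1)] = 2 := by decide
      rw [e1, e2]
      exact hv.2
  have hcard : (Wk 2 2 m).card ≤ A (2 + m) := by
    rw [A]
    calc (Wk 2 2 m).card
        = ((Wk 2 2 m).image (fun v => [((1:ℤ),(1:ℤ)), (1,1)] ++ v)).card :=
          (Finset.card_image_of_injective _ (fun a b h => List.append_cancel_left h)).symm
      _ ≤ (Wk 0 0 (2 + m)).card := Finset.card_le_card hsub
  have hc := card_compl 2 2 m
  have hb1 : 2 ^ ((2:ℤ) + 1).toNat * bad Prod.fst 2 m ≤ 3 ^ m :=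
    bad_le Prod.fst (fun F => sum_fst F) m 2
  have hb2 : 2 ^ ((2:ℤ) + 1).toNat * bad Prod.snd 2 m ≤ 3 ^ m :=
    bad_le Prod.snd (fun F => sum_snd F) m 2
  have e : ((2:ℤ) + 1).toNat = 3 := by decide
  rw [e] at hb1 hb2
  have : (8 : ℕ) * (bad Prod.fst 2 m + bad Prod.snd 2 m) ≤ 2 * 3 ^ m := by
    norm_num at hb1 hb2
    omega
  have h4 : 4 * 3 ^ m ≤ 4 * (Wk 2 2 m).card + 4 * (bad Prod.fst 2 m + bad Prod.snd 2 m) := by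
    omega
  have h5 : 3 * 3 ^ m ≤ 4 * (Wk 2 2 m).card := by omega
  have h5R : (3:ℝ) * 3 ^ m ≤ 4 * ((Wk 2 2 m).card : ℝ) := by exact_mod_cast h5
  have hcR : ((Wk 2 2 m).card : ℝ) ≤ (A (2 + m) : ℝ) := by exact_mod_cast hcard
  linarith

lemma sur_iff_take : ∀ (w : List Stp) (x y : ℤ), 0 ≤ x → 0 ≤ y →
    (sur x y w ↔ ∀ m ≤ w.length,
      0 ≤ x + gsum Prod.fst (w.take m) ∧ 0 ≤ y + gsum Prod.snd (w.take m)) := by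
  intro w
  induction w with
  | nil =>
    intro x y hx hy
    simp only [sur, List.length_nil, Nat.le_zero]
    constructor
    · rintro - m rfl
      simp [gsum_nil]
      omega
    · intro _; trivial
  | cons s t ih =>
    intro x y hx hy
    constructor
    · rintro ⟨h1, h2, h3⟩ m hm
      cases m with
      | zero => simp [gsum_nil]; omega
      | succ m =>
        rw [List.take_succ_cons, gsum_cons, gsum_cons]
        have := ((ih (x + s.1) (y + s.2) h1 h2).1 h3) m (by simpa using hm)
        constructor <;> [have := this.1; have := this.2] <;> omega
    · intro h
      have h1 : 0 ≤ x + s.1 := by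
        have := (h 1 (by simp)).1
        rw [List.take_succ_cons, List.take_zero, gsum_cons, gsum_nil] at this
        omega
      have h2 : 0 ≤ y + s.2 := by
        have := (h 1 (by simp)).2
        rw [List.take_succ_cons, List.take_zero, gsum_cons, gsum_nil] at this
        omega
      refine ⟨h1, h2, (ih (x + s.1) (y + s.2) h1 h2).2 ?_⟩
      intro m hm
      have := h (m + 1) (by simpa using hm)
      rw [List.take_succ_cons, gsum_cons, gsum_cons] at this
      constructor <;> [have := this.1; have := this.2] <;> omega

lemma Iic_sum {n : ℕ} (f : Fin n → Stp) (g : Stp → ℤ) (k : Fin n) :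
    gsum g ((List.ofFn f).take (k.1 + 1)) = ∑ j ∈ Finset.Iic k, g (f j) := by
  rw [gsum, List.map_take, List.map_ofFn, List.sum_take_ofFn]
  refine Finset.sum_congr ?_ fun _ _ => rfl
  ext j
  simp only [Finset.mem_filter, Finset.mem_Iic, Finset.mem_univ, true_and,
    Fin.le_def, Nat.lt_succ_iff]

lemma mem_Wk_ofFn (n : ℕ) (f : Fin n → Stp) :
    List.ofFn f ∈ Wk 0 0 n ↔
      ((∀ k, f k ∈ SA) ∧
        ∀ k : Fin n, 0 ≤ ∑ j ∈ Finset.Iic k, (f j).1 ∧ 0 ≤ ∑ j ∈ Finset.Iic k, (f j).2) := by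
  rw [Wk, Finset.mem_filter, mem_seqs,
    sur_iff_take _ 0 0 le_rfl le_rfl]
  simp only [List.length_ofFn, eq_self_iff_true, true_and]
  constructor
  · rintro ⟨hmem, hsur⟩
    refine ⟨fun k => hmem _ (by rw [List.mem_ofFn]; exact ⟨k, rfl⟩), fun k => ?_⟩
    have := hsur (k.1 + 1) (by omega)
    rw [Iic_sum f Prod.fst k, Iic_sum f Prod.snd k] at this
    constructor <;> [have := this.1; have := this.2] <;> omega
  · rintro ⟨hmem, hsum⟩
    refine ⟨fun s hs => ?_, fun m hm => ?_⟩
    · rw [List.mem_ofFn] at hs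
      obtain ⟨k, rfl⟩ := hs
      exact hmem k
    · cases m with
      | zero => simp [gsum_nil]
      | succ m =>
        have hk : m < n := by omega
        have := hsum ⟨m, hk⟩
        rw [← Iic_sum f Prod.fst ⟨m, hk⟩, ← Iic_sum f Prod.snd ⟨m, hk⟩] at this
        simp only [Fin.val_mk] at this
        constructor <;> [have := this.1; have := this.2] <;> omega

lemma qpw_eq (n : ℕ) : quarterPlaneWalks SA n = A n := by
  rw [A, ← Nat.card_eq_finsetCard]
  unfold quarterPlaneWalks
  apply Nat.card_congr
  refine Equiv.ofBijective
    (fun p => ⟨List.ofFn p.1, (mem_Wk_ofFn n p.1).2 ⟨p.2.1, p.2.2⟩⟩) ⟨?_, ?_⟩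
  · rintro ⟨f, hf⟩ ⟨f', hf'⟩ h
    simpa using List.ofFn_injective (congrArg Subtype.val h)
  · rintro ⟨w, hw⟩
    obtain ⟨hlen, -⟩ := mem_seqs.1 (Finset.mem_filter.1 hw).1
    obtain ⟨m, f, rfl⟩ : ∃ (m : ℕ) (f : Fin m → Stp), w = List.ofFn f :=
      ⟨w.length, w.get, (List.ofFn_get w).symm⟩
    have hmn : m = n := by simpa using hlen
    subst hmn
    exact ⟨⟨f, (mem_Wk_ofFn m f).1 hw⟩, rfl⟩

noncomputable def aseq (n : ℕ) : ℝ := (A n : ℝ) / 3 ^ n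

lemma aseq_nonneg (n : ℕ) : 0 ≤ aseq n := by
  rw [aseq]; positivity

lemma aseq_le (n m : ℕ) : aseq (n + m) ≤ aseq n := by
  rw [aseq, aseq, div_le_div_iff₀ (by positivity) (by positivity)]
  have h := M2 n m
  have hR : (A (n + m) : ℝ) ≤ (A n : ℝ) * 3 ^ m := by exact_mod_cast h
  have h3 : (0:ℝ) < 3 ^ n := by positivity
  rw [pow_add]
  nlinarith

lemma aseq_antitone : Antitone aseq := by
  intro n k h
  obtain ⟨m, rfl⟩ := Nat.exists_eq_add_of_le h
  exact aseq_le n m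

lemma aseq_gap (n m : ℕ) : aseq n ≤ aseq (n + m) + (2 * rr) ^ n / 3 ^ n := by
  have e : (A (n + m) : ℝ) / 3 ^ (n + m) + (2 * rr) ^ n / 3 ^ n
      = ((A (n + m) : ℝ) + 3 ^ m * (2 * rr) ^ n) / 3 ^ (n + m) := by
    rw [pow_add]
    field_simp
  rw [aseq, aseq, e, div_le_div_iff₀ (by positivity) (by positivity)]
  have h := M1 n m
  have h3 : (0:ℝ) < 3 ^ n := by positivity
  rw [pow_add]
  nlinarith

lemma bdd : BddBelow (Set.range aseq) := by
  refine ⟨0, ?_⟩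
  rintro x ⟨n, rfl⟩
  exact aseq_nonneg n

lemma A_zero : A 0 = 1 := by
  have : Wk 0 0 0 = {[]} := by
    rw [Wk]
    ext w
    simp only [Finset.mem_filter, Finset.mem_singleton, seqs]
    constructor
    · rintro ⟨h, -⟩; exact h
    · rintro rfl
      exact ⟨rfl, trivial⟩
  rw [A, this, Finset.card_singleton]

lemma A_one : 1 ≤ A 1 := by
  rw [A]
  refine Finset.card_pos.2 ⟨[((1:ℤ),(1:ℤ))], ?_⟩
  rw [Wk, Finset.mem_filter]
  constructor
  · exact mem_seqs.2 ⟨rfl, by decide⟩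
  · exact ⟨by norm_num, by norm_num, trivial⟩

lemma kappa_lb (k : ℕ) : (1:ℝ)/12 ≤ aseq k := by
  match k with
  | 0 =>
    rw [aseq, A_zero]
    norm_num
  | 1 =>
    rw [aseq]
    have : (1:ℝ) ≤ (A 1 : ℝ) := by exact_mod_cast A_one
    rw [div_le_div_iff₀ (by norm_num) (by positivity)] <;> norm_num
    linarith
  | (m + 2) =>
    rw [aseq]
    have h := M3 m
    have e : 2 + m = m + 2 := by omega
    rw [e] at h
    rw [le_div_iff₀ (by positivity)]
    have : (3:ℝ) ^ (m + 2) = 9 * 3 ^ m := by ring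
    rw [this]
    linarith

theorem modelA_asymptotics :
    ∃ κ C : ℝ, 0 < κ ∧ 0 < C ∧ ∀ n : ℕ,
      |(quarterPlaneWalks ({(-1,1),(1,1),(1,-1)} : Finset (ℤ × ℤ)) n : ℝ) - κ * 3 ^ n| ≤
        C * (2 * Real.sqrt 2) ^ n := by
  refine ⟨⨅ n, aseq n, 1, ?_, one_pos, ?_⟩
  · calc (0:ℝ) < 1/12 := by norm_num
      _ ≤ ⨅ n, aseq n := le_ciInf kappa_lb
  · intro n
    have hq : (quarterPlaneWalks ({(-1,1),(1,1),(1,-1)} : Finset (ℤ × ℤ)) n : ℕ) = A n :=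
      qpw_eq n
    rw [hq, one_mul]
    have h1 : (⨅ n, aseq n) ≤ aseq n := ciInf_le bdd n
    have h2 : aseq n - (2 * rr) ^ n / 3 ^ n ≤ ⨅ k, aseq k := by
      refine le_ciInf fun k => ?_
      rcases le_or_gt n k with h | h
      · obtain ⟨m, rfl⟩ := Nat.exists_eq_add_of_le h
        have := aseq_gap n m
        linarith
      · have hle := aseq_antitone (le_of_lt h)
        have hnn : 0 ≤ (2 * rr) ^ n / 3 ^ n := by
          have : (0:ℝ) ≤ 2 * rr := by nlinarith [rr_pos]
          positivity
        linarith
    have hAn : (A n : ℝ) = aseq n * 3 ^ n := by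
      rw [aseq]
      field_simp
    have hrr : (2 : ℝ) * Real.sqrt 2 = 2 * rr := rfl
    rw [hAn, hrr]
    have h3 : (0:ℝ) < 3 ^ n := by positivity
    have e : aseq n * 3 ^ n - (⨅ k, aseq k) * 3 ^ n = (aseq n - ⨅ k, aseq k) * 3 ^ n := by
      ring
    rw [e, abs_of_nonneg (by nlinarith)]
    have : (aseq n - ⨅ k, aseq k) ≤ (2 * rr) ^ n / 3 ^ n := by linarith
    calc (aseq n - ⨅ k, aseq k) * 3 ^ n ≤ ((2 * rr) ^ n / 3 ^ n) * 3 ^ n := by nlinarith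
      _ = (2 * rr) ^ n := by field_simp
end

section
/- Let C_n denote the number of quarter-plane walks of length n with steps from 𝒞 = {(−1,1),(0,1),(1,1),(1,0),(1,−1)}. Then there exist a real constant κ > 0 and a constant C > 0 such that for all n ≥ 0, |C_n − κ·5^n| ≤ C·(1+2√3)^n. -/
open Finset

namespace QPWC

def Cs : Finset (ℤ × ℤ) := {(-1,1),(0,1),(1,1),(1,0),(1,-1)}

abbrev St := {p : ℤ × ℤ // p ∈ Cs}

lemma card_St : Fintype.card St = 5 := by
  rw [Fintype.card_coe]; decide

def x1 (s : St) : ℤ := s.val.1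
def y1 (s : St) : ℤ := s.val.2

/-- Partial sum of `φ` along the first `k+1` steps. -/
def Ssum {n : ℕ} (φ : St → ℤ) (f : Fin n → St) (k : Fin n) : ℤ := ∑ j ∈ Iic k, φ (f j)

/-- Total sum of `φ` along the word. -/
def Tsum {n : ℕ} (φ : St → ℤ) (f : Fin n → St) : ℤ := ∑ j, φ (f j)

def Walk {n : ℕ} (f : Fin n → St) : Prop := ∀ k, 0 ≤ Ssum x1 f k ∧ 0 ≤ Ssum y1 f k

instance {n : ℕ} : DecidablePred (Walk (n := n)) := fun f => by
  unfold Walk Ssum; infer_instance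

instance {n : ℕ} {φ : St → ℤ} : DecidablePred (fun f : Fin n → St => ∃ k, Ssum φ f k < 0) :=
  fun f => by unfold Ssum; infer_instance

def WF (n : ℕ) : Finset (Fin n → St) := univ.filter Walk

def c (n : ℕ) : ℕ := (WF n).card

def BadT (φ : St → ℤ) (n : ℕ) : Finset (Fin n → St) :=
  univ.filter (fun f => Tsum φ f < 0)

def BadP (φ : St → ℤ) (n : ℕ) : Finset (Fin n → St) :=
  univ.filter (fun f => ∃ k, Ssum φ f k < 0)

/-! ### Link with `quarterPlaneWalks` -/

lemma qpw_eq_c (n : ℕ) : quarterPlaneWalks Cs n = c n := by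
  have e : {f : Fin n → ℤ × ℤ //
      (∀ k, f k ∈ Cs) ∧
      ∀ k : Fin n, 0 ≤ ∑ j ∈ Finset.Iic k, (f j).1 ∧ 0 ≤ ∑ j ∈ Finset.Iic k, (f j).2} ≃
      {g : Fin n → St // Walk g} :=
    { toFun := fun f => ⟨fun k => ⟨f.1 k, f.2.1 k⟩, fun k => f.2.2 k⟩
      invFun := fun g => ⟨fun k => (g.1 k).val, fun k => (g.1 k).2, fun k => g.2 k⟩
      left_inv := fun f => rfl
      right_inv := fun g => rfl }
  classical
  rw [quarterPlaneWalks, Nat.card_congr e, Nat.card_eq_fintype_card, Fintype.card_subtype]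
  simp only [c, WF]

/-! ### snoc lemmas -/

lemma Iic_castSucc_eq {n : ℕ} (j : Fin n) :
    (Iic (Fin.castSucc j) : Finset (Fin (n+1))) = (Iic j).map Fin.castSuccEmb := by
  ext k
  simp only [mem_Iic, mem_map, Fin.coe_castSuccEmb]
  constructor
  · intro h
    have hk : (k : ℕ) < n := lt_of_le_of_lt (by exact_mod_cast h) j.isLt
    refine ⟨⟨k, hk⟩, ?_, ?_⟩
    · exact_mod_cast h
    · ext; simp
  · rintro ⟨i, hi, rfl⟩
    exact_mod_cast hi

lemma Iic_last_eq {n : ℕ} : (Iic (Fin.last n) : Finset (Fin (n+1))) = univ := by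
  ext k; simp [Fin.le_last]

lemma Ssum_snoc_castSucc {n : ℕ} (φ : St → ℤ) (g : Fin n → St) (s : St) (j : Fin n) :
    Ssum φ (Fin.snoc g s) (Fin.castSucc j) = Ssum φ g j := by
  unfold Ssum
  rw [Iic_castSucc_eq, Finset.sum_map]
  refine Finset.sum_congr rfl fun i _ => ?_
  have he : (Fin.castSuccEmb i : Fin (n+1)) = Fin.castSucc i := rfl
  rw [he, Fin.snoc_castSucc]

lemma Ssum_snoc_last {n : ℕ} (φ : St → ℤ) (g : Fin n → St) (s : St) :
    Ssum φ (Fin.snoc g s) (Fin.last n) = Tsum φ g + φ s := by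
  unfold Ssum Tsum
  rw [Iic_last_eq, Fin.sum_univ_castSucc]
  simp [Fin.snoc_castSucc]

lemma Tsum_snoc {n : ℕ} (φ : St → ℤ) (g : Fin n → St) (s : St) :
    Tsum φ (Fin.snoc g s) = Tsum φ g + φ s := by
  unfold Tsum
  rw [Fin.sum_univ_castSucc]
  simp [Fin.snoc_castSucc]

lemma Tsum_nonneg_of_good {n : ℕ} {φ : St → ℤ} {g : Fin n → St}
    (h : ¬ ∃ k, Ssum φ g k < 0) : 0 ≤ Tsum φ g := by
  push_neg at h
  cases n with
  | zero => simp [Tsum]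
  | succ m =>
      have := h (Fin.last m)
      unfold Ssum at this
      rw [Iic_last_eq] at this
      exact this

lemma bad_snoc {n : ℕ} (φ : St → ℤ) (g : Fin n → St) (s : St) :
    (∃ k, Ssum φ (Fin.snoc g s) k < 0) ↔ (∃ k, Ssum φ g k < 0) ∨ Tsum φ g + φ s < 0 := by
  constructor
  · rintro ⟨k, hk⟩
    induction k using Fin.lastCases with
    | last => right; rwa [Ssum_snoc_last] at hk
    | cast j => left; exact ⟨j, by rwa [Ssum_snoc_castSucc] at hk⟩
  · rintro (⟨j, hj⟩ | h)
    · exact ⟨Fin.castSucc j, by rwa [Ssum_snoc_castSucc]⟩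
    · exact ⟨Fin.last n, by rwa [Ssum_snoc_last]⟩

lemma walk_snoc {n : ℕ} (g : Fin n → St) (s : St) :
    Walk (Fin.snoc g s) ↔ Walk g ∧ 0 ≤ Tsum x1 g + x1 s ∧ 0 ≤ Tsum y1 g + y1 s := by
  constructor
  · intro h
    refine ⟨fun j => ?_, ?_, ?_⟩
    · have := h (Fin.castSucc j)
      rwa [Ssum_snoc_castSucc, Ssum_snoc_castSucc] at this
    · have := (h (Fin.last n)).1; rwa [Ssum_snoc_last] at this
    · have := (h (Fin.last n)).2; rwa [Ssum_snoc_last] at this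
  · rintro ⟨hw, hx, hy⟩ k
    induction k using Fin.lastCases with
    | last => rw [Ssum_snoc_last, Ssum_snoc_last]; exact ⟨hx, hy⟩
    | cast j => rw [Ssum_snoc_castSucc, Ssum_snoc_castSucc]; exact hw j

/-! ### Weighted counts -/

lemma zpow_finset_sum {t : ℝ} (ht : t ≠ 0) {ι : Type*} (s : Finset ι) (g : ι → ℤ) :
    t ^ (∑ i ∈ s, g i) = ∏ i ∈ s, t ^ (g i) := by
  classical
  induction s using Finset.cons_induction with
  | empty => simp
  | cons a s' ha ih => rw [Finset.sum_cons, Finset.prod_cons, zpow_add₀ ht, ih]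

lemma sum_words_prod {n : ℕ} (w : St → ℝ) :
    ∑ f : Fin n → St, ∏ j, w (f j) = (∑ s : St, w s) ^ n := by
  classical
  have h := Finset.prod_univ_sum (fun _ : Fin n => (univ : Finset St)) (fun _ s => w s)
  rw [Fintype.piFinset_univ] at h
  rw [← h, Finset.prod_const, Finset.card_univ, Fintype.card_fin]

lemma sum_words_zpow {n : ℕ} (φ : St → ℤ) {t : ℝ} (ht : 0 < t) :
    ∑ f : Fin n → St, t ^ (- Tsum φ f) = (∑ s : St, t ^ (-φ s)) ^ n := by
  have h : ∀ f : Fin n → St, t ^ (- Tsum φ f) = ∏ j, t ^ (-(φ (f j))) := by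
    intro f
    rw [Tsum, ← Finset.sum_neg_distrib, zpow_finset_sum ht.ne']
  simp_rw [h]
  exact sum_words_prod (fun s => t ^ (-φ s))

/-- Chernoff-type bound. -/
lemma chernoff {n : ℕ} (φ : St → ℤ) {t : ℝ} (ht : 1 ≤ t) :
    ((BadT φ n).card : ℝ) * t ≤ (∑ s : St, t ^ (-φ s)) ^ n := by
  have ht0 : (0:ℝ) < t := lt_of_lt_of_le one_pos ht
  rw [← sum_words_zpow φ ht0]
  calc ((BadT φ n).card : ℝ) * t = ∑ _f ∈ BadT φ n, t := by rw [Finset.sum_const, nsmul_eq_mul]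
    _ ≤ ∑ f ∈ BadT φ n, t ^ (- Tsum φ f) := by
        refine Finset.sum_le_sum fun f hf => ?_
        have hbad : Tsum φ f < 0 := by
          simpa [BadT] using hf
        calc t = t ^ (1:ℤ) := (zpow_one t).symm
          _ ≤ t ^ (- Tsum φ f) := zpow_le_zpow_right₀ ht (by omega)
    _ ≤ ∑ f : Fin n → St, t ^ (- Tsum φ f) := by
        refine Finset.sum_le_sum_of_subset_of_nonneg (Finset.subset_univ _) fun f _ _ => ?_
        positivity

/-! ### Martingale bound -/

section Martingale

variable (φ : St → ℤ)

noncomputable def V (n : ℕ) (f : Fin n → St) : ℝ :=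
  if ∃ k, Ssum φ f k < 0 then 3 else (3:ℝ) ^ (- Tsum φ f)

lemma sum_V (h1 : ∀ s, -1 ≤ φ s) (h5 : ∑ s : St, (3:ℝ) ^ (-φ s) = 5) (n : ℕ) :
    ∑ f : Fin n → St, V φ n f = 5 ^ n := by
  induction n with
  | zero =>
      rw [Fintype.sum_unique]
      have : ¬ ∃ k : Fin 0, Ssum φ (default) k < 0 := by
        rintro ⟨k, -⟩; exact k.elim0
      simp [V, this, Tsum]
  | succ n ih =>
      have key : ∀ (g : Fin n → St),
          ∑ s : St, V φ (n+1) (Fin.snoc g s) = 5 * V φ n g := by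
        intro g
        by_cases hg : ∃ k, Ssum φ g k < 0
        · have hb : ∀ s : St, V φ (n+1) (Fin.snoc g s) = 3 := by
            intro s
            rw [V, if_pos]
            rw [bad_snoc]; exact Or.inl hg
          rw [Finset.sum_congr rfl (fun s _ => hb s), Finset.sum_const, card_univ, card_St,
            V, if_pos hg, nsmul_eq_mul]
          norm_num
        · have hT : 0 ≤ Tsum φ g := Tsum_nonneg_of_good hg
          have hb : ∀ s : St, V φ (n+1) (Fin.snoc g s) = (3:ℝ) ^ (-(Tsum φ g + φ s)) := by
            intro s
            rw [V]
            by_cases hs : ∃ k, Ssum φ (Fin.snoc g s) k < 0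
            · rw [if_pos hs]
              rw [bad_snoc] at hs
              rcases hs with hs | hs
              · exact absurd hs hg
              · have : Tsum φ g + φ s = -1 := by have := h1 s; omega
                rw [this]; norm_num
            · rw [if_neg hs, Tsum_snoc]
          rw [Finset.sum_congr rfl (fun s _ => hb s)]
          have : ∀ s : St, (3:ℝ) ^ (-(Tsum φ g + φ s)) =
              (3:ℝ) ^ (- Tsum φ g) * (3:ℝ) ^ (-φ s) := by
            intro s
            rw [neg_add, zpow_add₀ (by norm_num : (3:ℝ) ≠ 0)]
          rw [Finset.sum_congr rfl (fun s _ => this s), ← Finset.mul_sum, h5, V, if_neg hg]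
          ring
      calc ∑ f : Fin (n+1) → St, V φ (n+1) f
          = ∑ p : St × (Fin n → St), V φ (n+1) (Fin.snocEquiv (fun _ => St) p) :=
            (Equiv.sum_comp (Fin.snocEquiv (fun _ => St)) _).symm
        _ = ∑ p : St × (Fin n → St), V φ (n+1) (Fin.snoc p.2 p.1) := by
            refine Finset.sum_congr rfl fun p _ => ?_
            congr 1
        _ = ∑ g : Fin n → St, ∑ s : St, V φ (n+1) (Fin.snoc g s) := by
            rw [Fintype.sum_prod_type]
            exact Finset.sum_comm
        _ = ∑ g : Fin n → St, 5 * V φ n g := Finset.sum_congr rfl fun g _ => key g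
        _ = 5 * ∑ g : Fin n → St, V φ n g := by rw [Finset.mul_sum]
        _ = 5 ^ (n+1) := by rw [ih]; ring

lemma badP_card_le (h1 : ∀ s, -1 ≤ φ s) (h5 : ∑ s : St, (3:ℝ) ^ (-φ s) = 5) (n : ℕ) :
    ((BadP φ n).card : ℝ) * 3 ≤ 5 ^ n := by
  rw [← sum_V φ h1 h5 n]
  calc ((BadP φ n).card : ℝ) * 3 = ∑ f ∈ BadP φ n, (3:ℝ) := by
        rw [Finset.sum_const, nsmul_eq_mul]
    _ = ∑ f ∈ BadP φ n, V φ n f := by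
        refine Finset.sum_congr rfl fun f hf => ?_
        rw [V, if_pos (by simpa [BadP] using hf)]
    _ ≤ ∑ f : Fin n → St, V φ n f := by
        refine Finset.sum_le_sum_of_subset_of_nonneg (Finset.subset_univ _) fun f _ _ => ?_
        rw [V]
        split
        · norm_num
        · positivity

end Martingale

/-! ### Numerical step sums -/

lemma sum_Cs (F : ℤ × ℤ → ℝ) :
    ∑ p ∈ Cs, F p = F (-1,1) + F (0,1) + F (1,1) + F (1,0) + F (1,-1) := by
  rw [Cs, Finset.sum_insert (by decide), Finset.sum_insert (by decide),
    Finset.sum_insert (by decide), Finset.sum_insert (by decide), Finset.sum_singleton]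
  ring

lemma sqrt3_pos : (0:ℝ) < Real.sqrt 3 := Real.sqrt_pos.mpr (by norm_num)

lemma sqrt3_sq : Real.sqrt 3 * Real.sqrt 3 = 3 := Real.mul_self_sqrt (by norm_num)

lemma one_le_sqrt3 : (1:ℝ) ≤ Real.sqrt 3 := by
  nlinarith [sqrt3_sq, sqrt3_pos]

lemma sum_st (F : ℤ × ℤ → ℝ) :
    ∑ s : St, F s.val = F (-1,1) + F (0,1) + F (1,1) + F (1,0) + F (1,-1) := by
  rw [← sum_Cs F]
  exact Finset.sum_coe_sort Cs F

lemma sum_x1_three : ∑ s : St, (3:ℝ) ^ (-x1 s) = 5 := by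
  have := sum_st (fun p => (3:ℝ) ^ (-(p.1)))
  simp only at this
  rw [show (fun s : St => (3:ℝ) ^ (-x1 s)) = fun s : St => (3:ℝ) ^ (-(s.val.1)) from rfl] at *
  rw [this]
  norm_num

lemma sum_y1_three : ∑ s : St, (3:ℝ) ^ (-y1 s) = 5 := by
  have := sum_st (fun p => (3:ℝ) ^ (-(p.2)))
  simp only at this
  rw [show (fun s : St => (3:ℝ) ^ (-y1 s)) = fun s : St => (3:ℝ) ^ (-(s.val.2)) from rfl] at *
  rw [this]
  norm_num

lemma sum_x1_sqrt : ∑ s : St, (Real.sqrt 3) ^ (-x1 s) = 1 + 2 * Real.sqrt 3 := by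
  have := sum_st (fun p => (Real.sqrt 3) ^ (-(p.1)))
  simp only at this
  rw [show (fun s : St => (Real.sqrt 3) ^ (-x1 s)) =
    fun s : St => (Real.sqrt 3) ^ (-(s.val.1)) from rfl] at *
  rw [this]
  have hinv : (Real.sqrt 3)⁻¹ * 3 = Real.sqrt 3 := by
    rw [inv_mul_eq_div, eq_comm, eq_div_iff sqrt3_pos.ne', sqrt3_sq]
  norm_num [zpow_neg, zpow_one]
  nlinarith [sqrt3_sq, sqrt3_pos, hinv]

lemma sum_y1_sqrt : ∑ s : St, (Real.sqrt 3) ^ (-y1 s) = 1 + 2 * Real.sqrt 3 := by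
  have := sum_st (fun p => (Real.sqrt 3) ^ (-(p.2)))
  simp only at this
  rw [show (fun s : St => (Real.sqrt 3) ^ (-y1 s)) =
    fun s : St => (Real.sqrt 3) ^ (-(s.val.2)) from rfl] at *
  rw [this]
  have hinv : (Real.sqrt 3)⁻¹ * 3 = Real.sqrt 3 := by
    rw [inv_mul_eq_div, eq_comm, eq_div_iff sqrt3_pos.ne', sqrt3_sq]
  norm_num [zpow_neg, zpow_one]
  nlinarith [sqrt3_sq, sqrt3_pos, hinv]

lemma h1x : ∀ s : St, -1 ≤ x1 s := by
  rintro ⟨p, hp⟩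
  rw [x1]
  fin_cases hp <;> norm_num

lemma h1y : ∀ s : St, -1 ≤ y1 s := by
  rintro ⟨p, hp⟩
  rw [y1]
  fin_cases hp <;> norm_num

/-! ### Counting inequalities -/

lemma lower_bound (n : ℕ) : (5:ℝ) ^ n ≤ 3 * c n := by
  have hsub : (univ : Finset (Fin n → St)) ⊆ WF n ∪ BadP x1 n ∪ BadP y1 n := by
    intro f _
    simp only [Finset.mem_union, WF, BadP, Finset.mem_filter, Finset.mem_univ, true_and]
    by_cases hx : ∃ k, Ssum x1 f k < 0
    · exact Or.inl (Or.inr hx)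
    · by_cases hy : ∃ k, Ssum y1 f k < 0
      · exact Or.inr hy
      · push_neg at hx hy
        exact Or.inl (Or.inl (fun k => ⟨hx k, hy k⟩))
  have h5n : ((univ : Finset (Fin n → St)).card : ℝ) = 5 ^ n := by
    rw [Finset.card_univ, Fintype.card_fun, card_St, Fintype.card_fin]
    push_cast; ring
  have h3 : (univ : Finset (Fin n → St)).card ≤
      (WF n).card + (BadP x1 n).card + (BadP y1 n).card :=
    le_trans (Finset.card_le_card hsub) ((Finset.card_union_le _ _).trans
      (Nat.add_le_add_right (Finset.card_union_le (WF n) (BadP x1 n)) _))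
  have hcard : (5:ℝ)^n ≤ (c n : ℝ) + (BadP x1 n).card + (BadP y1 n).card := by
    rw [← h5n, c]
    exact_mod_cast h3
  have bx := badP_card_le x1 h1x sum_x1_three n
  have by' := badP_card_le y1 h1y sum_y1_three n
  linarith

lemma step_upper (n : ℕ) :
    5 * (c n : ℝ) ≤ (c (n+1) : ℝ) + (BadT x1 (n+1)).card + (BadT y1 (n+1)).card := by
  classical
  set P : Finset (St × (Fin n → St)) := univ ×ˢ WF n with hP
  have hcardP : (P.card : ℝ) = 5 * c n := by
    rw [hP, Finset.card_product, Finset.card_univ, card_St, c]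
    push_cast; ring
  set Good : St × (Fin n → St) → Prop :=
    fun p => 0 ≤ Tsum x1 p.2 + x1 p.1 ∧ 0 ≤ Tsum y1 p.2 + y1 p.1 with hGood
  have hsplit : P.card = (P.filter Good).card + (P.filter (fun p => ¬ Good p)).card :=
    (Finset.card_filter_add_card_filter_not (fun p => Good p)).symm
  have hinj : ∀ (p : St × (Fin n → St)), ∀ (q : St × (Fin n → St)),
      (Fin.snoc p.2 p.1 : Fin (n+1) → St) = (Fin.snoc q.2 q.1 : Fin (n+1) → St) → p = q := by
    intro p q h
    exact (Fin.snocEquiv (fun _ => St)).injective h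
  have hgood : (P.filter Good).card ≤ c (n+1) := by
    apply Finset.card_le_card_of_injOn (fun p => Fin.snoc p.2 p.1)
    · intro p hp
      rw [Finset.mem_coe, Finset.mem_filter] at hp; rw [Finset.mem_coe]
      obtain ⟨hpP, hg⟩ := hp
      rw [hP, Finset.mem_product] at hpP
      have hw : Walk p.2 := by simpa [WF] using hpP.2
      simp only [WF, Finset.mem_filter, Finset.mem_univ, true_and]
      rw [walk_snoc]
      exact ⟨hw, hg.1, hg.2⟩
    · intro p _ q _ h
      exact hinj p q h
  have hbad : (P.filter (fun p => ¬ Good p)).card ≤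
      (BadT x1 (n+1)).card + (BadT y1 (n+1)).card := by
    refine le_trans ?_ (Finset.card_union_le _ _)
    apply Finset.card_le_card_of_injOn (fun p => Fin.snoc p.2 p.1)
    · intro p hp
      rw [Finset.mem_coe, Finset.mem_filter] at hp; rw [Finset.mem_coe]
      rw [Finset.mem_union]
      have h' : Tsum x1 p.2 + x1 p.1 < 0 ∨ Tsum y1 p.2 + y1 p.1 < 0 := by
        rcases hp with ⟨-, hng⟩
        by_contra hc
        push_neg at hc
        exact hng ⟨hc.1, hc.2⟩
      rcases h' with h' | h'
      · left; simp only [BadT, Finset.mem_filter, Finset.mem_univ, true_and]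
        rwa [Tsum_snoc]
      · right; simp only [BadT, Finset.mem_filter, Finset.mem_univ, true_and]
        rwa [Tsum_snoc]
    · intro p _ q _ h
      exact hinj p q h
  have hsum : P.card ≤ c (n+1) + ((BadT x1 (n+1)).card + (BadT y1 (n+1)).card) := by
    rw [hsplit]; exact Nat.add_le_add hgood hbad
  have hsum' := (Nat.cast_le (α := ℝ)).mpr hsum
  rw [hcardP] at hsum'
  push_cast at hsum'
  linarith

lemma antitone_step (n : ℕ) : c (n+1) ≤ 5 * c n := by
  classical
  have h : (WF (n+1)).card ≤ ((univ : Finset St) ×ˢ WF n).card := by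
    apply Finset.card_le_card_of_injOn
      (fun f => ((Fin.snocEquiv (fun _ => St)).symm f))
    · intro f hf
      have hwf : Walk f := by simpa [WF] using hf
      simp only [Finset.mem_coe, Finset.mem_product, Finset.mem_univ, true_and, WF, Finset.mem_filter]
      have hsnoc : Fin.snoc (Fin.init f) (f (Fin.last n)) = f := Fin.snoc_init_self f
      have hw2 : Walk (Fin.snoc (Fin.init f) (f (Fin.last n))) := by rwa [hsnoc]
      rw [walk_snoc] at hw2
      exact hw2.1
    · intro p _ q _ h
      exact (Fin.snocEquiv (fun _ => St)).symm.injective h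
  rw [Finset.card_product, Finset.card_univ, card_St] at h
  exact h

/-! ### Putting it together -/

theorem main : ∃ κ C : ℝ, 0 < κ ∧ 0 < C ∧ ∀ n : ℕ,
    |(c n : ℝ) - κ * 5 ^ n| ≤ C * (1 + 2 * Real.sqrt 3) ^ n := by
  classical
  set β : ℝ := 1 + 2 * Real.sqrt 3 with hβ
  have hβpos : 0 < β := by positivity
  have hβ5 : β < 5 := by
    have : Real.sqrt 3 < 2 := by nlinarith [sqrt3_sq, sqrt3_pos]
    linarith
  set q : ℝ := β / 5 with hq
  have hq0 : 0 < q := by positivity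
  have hq1 : q < 1 := by rw [hq]; linarith
  set p : ℕ → ℝ := fun n => (c n : ℝ) / 5 ^ n with hp
  have hppos : ∀ n, (1:ℝ)/3 ≤ p n := by
    intro n
    have := lower_bound n
    rw [hp]
    rw [div_le_div_iff₀ (by norm_num) (by positivity)]
    linarith
  -- bound on BadT
  have hBadT : ∀ φ : St → ℤ, (∑ s : St, (Real.sqrt 3) ^ (-φ s) = β) →
      ∀ m : ℕ, ((BadT φ m).card : ℝ) ≤ β ^ m / Real.sqrt 3 := by
    intro φ hφ m
    have := chernoff (n := m) φ one_le_sqrt3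
    rw [hφ] at this
    rw [le_div_iff₀ sqrt3_pos]
    exact this
  -- one-step decay
  have hstep : ∀ n, p n - p (n+1) ≤ (2 / Real.sqrt 3) * q ^ (n+1) := by
    intro n
    have h1 := step_upper n
    have hbx := hBadT x1 sum_x1_sqrt (n+1)
    have hby := hBadT y1 sum_y1_sqrt (n+1)
    have h5 : (0:ℝ) < 5 ^ (n+1) := by positivity
    have hd : 5 * (c n:ℝ) - (c (n+1):ℝ) ≤ 2 / Real.sqrt 3 * β ^ (n+1) := by
      have hs3 : (0:ℝ) < Real.sqrt 3 := sqrt3_pos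
      have e : β ^ (n+1) / Real.sqrt 3 + β ^ (n+1) / Real.sqrt 3 =
          2 / Real.sqrt 3 * β ^ (n+1) := by field_simp; ring
      linarith
    have key : p n - p (n+1) = (5 * (c n:ℝ) - (c (n+1):ℝ)) / 5 ^ (n+1) := by
      rw [hp]
      field_simp
      ring
    rw [key]
    calc (5 * (c n:ℝ) - (c (n+1):ℝ)) / 5 ^ (n+1)
        ≤ (2 / Real.sqrt 3 * β ^ (n+1)) / 5 ^ (n+1) := by gcongr
      _ = (2 / Real.sqrt 3) * q ^ (n+1) := by
          rw [hq, div_pow]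
          ring
  have hanti : ∀ n m, n ≤ m → p m ≤ p n := by
    have step : ∀ n, p (n+1) ≤ p n := by
      intro n
      rw [hp]
      have := antitone_step n
      rw [div_le_div_iff₀ (by positivity) (by positivity)]
      have : (c (n+1) : ℝ) ≤ 5 * c n := by exact_mod_cast this
      calc (c (n+1):ℝ) * 5 ^ n ≤ (5 * c n) * 5 ^ n := by
            apply mul_le_mul_of_nonneg_right this (by positivity)
        _ = (c n:ℝ) * 5 ^ (n+1) := by ring
    exact fun n m h => antitone_nat_of_succ_le step h
  set K : ℝ := (2 / Real.sqrt 3) * q * (1 - q)⁻¹ with hK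
  have hKpos : 0 < K := by
    rw [hK]
    have : (0:ℝ) < 1 - q := by linarith
    positivity
  -- cascade bound
  have hcascade : ∀ n m, p n - p m ≤ K * q ^ n := by
    intro n m
    rcases le_total m n with h | h
    · have := hanti m n h
      have : p n - p m ≤ 0 := by linarith
      have : (0:ℝ) ≤ K * q ^ n := by positivity
      linarith
    · obtain ⟨d, rfl⟩ := Nat.exists_eq_add_of_le h
      have tele : ∑ i ∈ Finset.range d, (p (n+i) - p (n+i+1)) = p n - p (n + d) :=
        Finset.sum_range_sub' (fun i => p (n+i)) d
      rw [← tele]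
      calc ∑ i ∈ Finset.range d, (p (n+i) - p (n+i+1))
          ≤ ∑ i ∈ Finset.range d, (2 / Real.sqrt 3) * q ^ (n+i+1) := by
            refine Finset.sum_le_sum fun i _ => ?_
            exact hstep (n+i)
        _ = (2 / Real.sqrt 3) * q ^ (n+1) * ∑ i ∈ Finset.range d, q ^ i := by
            rw [Finset.mul_sum]
            refine Finset.sum_congr rfl fun i _ => ?_
            rw [show n+i+1 = (n+1)+i by omega, pow_add]
            ring
        _ ≤ (2 / Real.sqrt 3) * q ^ (n+1) * (1 - q)⁻¹ := by
            apply mul_le_mul_of_nonneg_left _ (by positivity)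
            have := Summable.sum_le_tsum (Finset.range d)
              (fun i _ => by positivity : ∀ i ∉ Finset.range d, (0:ℝ) ≤ q ^ i)
              (summable_geometric_of_lt_one hq0.le hq1)
            rwa [tsum_geometric_of_lt_one hq0.le hq1] at this
        _ = K * q ^ n := by rw [hK]; ring
  -- define κ
  have hbdd : BddBelow (Set.range p) := ⟨1/3, by rintro _ ⟨n, rfl⟩; exact hppos n⟩
  set κ : ℝ := ⨅ n, p n with hκ
  have hκle : ∀ n, κ ≤ p n := fun n => ciInf_le hbdd n
  have hκpos : 0 < κ := by
    have : (1:ℝ)/3 ≤ κ := le_ciInf hppos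
    linarith
  have hκge : ∀ n, p n - κ ≤ K * q ^ n := by
    intro n
    have : p n - K * q ^ n ≤ κ := by
      apply le_ciInf
      intro m
      have := hcascade n m
      linarith
    linarith
  refine ⟨κ, K, hκpos, hKpos, fun n => ?_⟩
  have h5n : (0:ℝ) < 5 ^ n := by positivity
  have hc : (c n : ℝ) = p n * 5 ^ n := by
    rw [hp]; field_simp
  have habs : |(c n : ℝ) - κ * 5 ^ n| = (p n - κ) * 5 ^ n := by
    rw [hc, abs_of_nonneg]
    · ring
    · have := hκle n
      nlinarith
  rw [habs]
  calc (p n - κ) * 5 ^ n ≤ (K * q ^ n) * 5 ^ n := by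
        apply mul_le_mul_of_nonneg_right (hκge n) h5n.le
    _ = K * β ^ n := by
        rw [hq]
        rw [div_pow]
        field_simp
  -- done

end QPWC

theorem modelC_asymptotics :
    ∃ κ C : ℝ, 0 < κ ∧ 0 < C ∧ ∀ n : ℕ,
      |(quarterPlaneWalks ({(-1,1),(0,1),(1,1),(1,0),(1,-1)} : Finset (ℤ × ℤ)) n : ℝ) - κ * 5 ^ n| ≤
        C * (1 + 2 * Real.sqrt 3) ^ n := by
  obtain ⟨κ, C, hκ, hC, h⟩ := QPWC.main
  exact ⟨κ, C, hκ, hC, fun n => by rw [show ({(-1,1),(0,1),(1,1),(1,0),(1,-1)} : Finset (ℤ × ℤ)) = QPWC.Cs from rfl, QPWC.qpw_eq_c]; exact h n⟩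
end

section
/- For every natural number n ≥ 1 and every complex number q with |q| = 1, q ≠ 1 and q ≠ −1, one has α_n(q) ≠ 0, where α_n(q) = q^{4n} + q^{2n+2} − 4q^{2n} + q^{2n−2} + 1. -/
theorem alpha_no_roots_on_unit_circle (n : ℕ) (hn : 1 ≤ n) (q : ℂ)
    (hq : ‖q‖ = 1) (h1 : q ≠ 1) (h2 : q ≠ -1) :
    q ^ (4 * n) + q ^ (2 * n + 2) - 4 * q ^ (2 * n) + q ^ (2 * n - 2) + 1 ≠ 0 := by
  have hq0 : q ≠ 0 := by
    intro h; rw [h] at hq; simp at hq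
  set z := q ^ (2 * n) with hz
  set w := q ^ 2 with hw
  have hz0 : z ≠ 0 := pow_ne_zero _ hq0
  have hw0 : w ≠ 0 := pow_ne_zero _ hq0
  have habsz : ‖z‖ = 1 := by rw [hz, norm_pow, hq, one_pow]
  have habsw : ‖w‖ = 1 := by rw [hw, norm_pow, hq, one_pow]
  have e1 : q ^ (4 * n) = z * z := by rw [hz, ← pow_add]; congr 1; ring
  have e2 : q ^ (2 * n + 2) = z * w := by rw [hz, hw, ← pow_add]
  have e3 : q ^ (2 * n - 2) = z / w := by
    rw [hz, hw, div_eq_mul_inv]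
    exact pow_sub₀ q hq0 (by omega)
  intro h
  rw [e1, e2, e3] at h
  clear_value z w
  clear e1 e2 e3
  have key : z + z⁻¹ + (w + w⁻¹) = 4 := by
    field_simp at h ⊢
    linear_combination h
  rw [Complex.inv_eq_conj habsz, Complex.inv_eq_conj habsw,
    Complex.add_conj, Complex.add_conj] at key
  have hre : (z.re : ℝ) + w.re = 2 := by
    have := congrArg Complex.re key
    simp at this
    linarith
  have hzre : z.re ≤ 1 := habsz ▸ Complex.re_le_norm z
  have hwre : w.re ≤ 1 := habsw ▸ Complex.re_le_norm w
  have hwre1 : w.re = 1 := by linarith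
  have hwim : w.im = 0 := by
    have hns : w.re ^ 2 + w.im ^ 2 = 1 := by
      have := Complex.sq_norm w
      rw [habsw, Complex.normSq_apply] at this
      nlinarith [this]
    nlinarith
  have hw1 : w = 1 := by
    apply Complex.ext <;> simp [hwre1, hwim]
  have : (q - 1) * (q + 1) = 0 := by
    have hq2 : q ^ 2 = 1 := hw ▸ hw1
    linear_combination hq2
  rcases mul_eq_zero.mp this with h' | h'
  · exact h1 (sub_eq_zero.mp h')
  · exact h2 (eq_neg_of_add_eq_zero_left h')
end

section
/- For every natural number n ≥ 1 and every complex number q with |q| = 1, q ≠ 1 and q ≠ −1, one has γ_n(q) ≠ 0, where γ_n(q) = q²(1+q²−q)(1+q^{4n}) + q(q²−3q+1)(q+1)²(q^n+q^{3n}) + q^{2n}(1−q²−4q+14q³−4q⁵−q⁴+q⁶). -/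
lemma F_pos (c x : ℝ) (hc1 : -2 < c) (hc2 : c < 2) (hx1 : -2 ≤ x) (hx2 : x ≤ 2) :
    0 < (c - 1) * (x ^ 2 - 2) + (c + 2) * (c - 3) * x + c ^ 3 - 4 * c ^ 2 - 4 * c + 22 := by
  rcases le_or_gt c 1 with hc | hc
  · nlinarith [mul_nonneg (mul_nonneg (show (0:ℝ) ≤ 2 - x by linarith)
        (show (0:ℝ) ≤ c + 2 by linarith)) (show (0:ℝ) ≤ 12 - 4 * c by linarith),
      mul_pos (show (0:ℝ) < c + 2 by linarith)
        (mul_pos (show (0:ℝ) < 2 - c by linarith) (show (0:ℝ) < 2 - c by linarith)),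
      mul_nonneg (show (0:ℝ) ≤ 1 - c by linarith)
        (mul_nonneg (show (0:ℝ) ≤ 2 - x by linarith) (show (0:ℝ) ≤ 2 + x by linarith))]
  · nlinarith [mul_pos (show (0:ℝ) < c + 2 by linarith)
        (mul_pos (show (0:ℝ) < 2 - c by linarith) (show (0:ℝ) < 2 - c by linarith)),
      mul_nonneg (mul_nonneg (show (0:ℝ) ≤ 2 - x by linarith)
        (show (0:ℝ) ≤ 2 - c by linarith)) (show (0:ℝ) ≤ 5 + c by linarith),
      mul_nonneg (show (0:ℝ) ≤ c - 1 by linarith) (sq_nonneg (2 - x))]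

theorem gamma_no_roots_on_unit_circle (n : ℕ) (hn : 1 ≤ n) (q : ℂ)
    (hq : ‖q‖ = 1) (h1 : q ≠ 1) (h2 : q ≠ -1) :
    q ^ 2 * (1 + q ^ 2 - q) * (1 + q ^ (4 * n)) +
      q * (q ^ 2 - 3 * q + 1) * (q + 1) ^ 2 * (q ^ n + q ^ (3 * n)) +
      q ^ (2 * n) *
        (1 - q ^ 2 - 4 * q + 14 * q ^ 3 - 4 * q ^ 5 - q ^ 4 + q ^ 6) ≠ 0 := by
  have hq0 : q ≠ 0 := by
    intro h; rw [h] at hq; simp at hq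
  set u : ℂ := q ^ n with hu_def
  have hu : ‖u‖ = 1 := by rw [hu_def, norm_pow, hq, one_pow]
  have hu0 : u ≠ 0 := pow_ne_zero n hq0
  -- real parts
  have hsq : q.re * q.re + q.im * q.im = 1 := by
    rw [← Complex.normSq_apply, ← Complex.sq_norm, hq]; norm_num
  have hre1 : q.re < 1 := by
    rcases lt_or_ge q.re 1 with h | h
    · exact h
    · exfalso; apply h1
      have hre : q.re = 1 := by nlinarith
      have him : q.im = 0 := by nlinarith
      apply Complex.ext <;> simp [hre, him]
  have hre2 : -1 < q.re := by
    rcases lt_or_ge (-1 : ℝ) q.re with h | h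
    · exact h
    · exfalso; apply h2
      have hre : q.re = -1 := by nlinarith
      have him : q.im = 0 := by nlinarith
      apply Complex.ext <;> simp [hre, him]
  have hure : |u.re| ≤ 1 := by
    calc |u.re| ≤ ‖u‖ := Complex.abs_re_le_norm u
    _ = 1 := hu
  have hure1 : u.re ≤ 1 := (abs_le.mp hure).2
  have hure2 : -1 ≤ u.re := (abs_le.mp hure).1
  -- conjugates
  have hCq : q + q⁻¹ = ((2 * q.re : ℝ) : ℂ) := by
    rw [Complex.inv_def, Complex.normSq_eq_norm_sq, hq]
    push_cast
    simpa using Complex.add_conj q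
  have hCu : u + u⁻¹ = ((2 * u.re : ℝ) : ℂ) := by
    rw [Complex.inv_def, Complex.normSq_eq_norm_sq, hu]
    push_cast
    simpa using Complex.add_conj u
  -- key algebraic identity
  have h4 : q ^ (4 * n) = u ^ 4 := by rw [hu_def, ← pow_mul, mul_comm]
  have h3 : q ^ (3 * n) = u ^ 3 := by rw [hu_def, ← pow_mul, mul_comm]
  have h2' : q ^ (2 * n) = u ^ 2 := by rw [hu_def, ← pow_mul, mul_comm]
  have key : q ^ 2 * (1 + q ^ 2 - q) * (1 + q ^ (4 * n)) +
      q * (q ^ 2 - 3 * q + 1) * (q + 1) ^ 2 * (q ^ n + q ^ (3 * n)) +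
      q ^ (2 * n) * (1 - q ^ 2 - 4 * q + 14 * q ^ 3 - 4 * q ^ 5 - q ^ 4 + q ^ 6) =
      u ^ 2 * q ^ 3 * ((q + q⁻¹ - 1) * ((u + u⁻¹) ^ 2 - 2) +
        (q + q⁻¹ + 2) * (q + q⁻¹ - 3) * (u + u⁻¹) +
        (q + q⁻¹) ^ 3 - 4 * (q + q⁻¹) ^ 2 - 4 * (q + q⁻¹) + 22) := by
    rw [h4, h3, h2', ← hu_def]
    clear_value u
    have e1 : q ^ 3 * (q + q⁻¹ - 1) = q ^ 2 * (q ^ 2 + 1 - q) := by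
      field_simp
    have e2 : q ^ 3 * ((q + q⁻¹ + 2) * (q + q⁻¹ - 3)) = q * (q + 1) ^ 2 * (q ^ 2 - 3 * q + 1) := by
      field_simp; ring
    have e3 : q ^ 3 * ((q + q⁻¹) ^ 3 - 4 * (q + q⁻¹) ^ 2 - 4 * (q + q⁻¹) + 22) =
        (q ^ 2 + 1) ^ 3 - 4 * q * (q ^ 2 + 1) ^ 2 - 4 * q ^ 2 * (q ^ 2 + 1) + 22 * q ^ 3 := by
      field_simp
    have e4 : u ^ 2 * ((u + u⁻¹) ^ 2 - 2) = u ^ 4 + 1 := by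
      field_simp; ring
    have e5 : u ^ 2 * (u + u⁻¹) = u * (u ^ 2 + 1) := by
      field_simp
    calc q ^ 2 * (1 + q ^ 2 - q) * (1 + u ^ 4) +
        q * (q ^ 2 - 3 * q + 1) * (q + 1) ^ 2 * (u + u ^ 3) +
        u ^ 2 * (1 - q ^ 2 - 4 * q + 14 * q ^ 3 - 4 * q ^ 5 - q ^ 4 + q ^ 6)
        = q ^ 2 * (q ^ 2 + 1 - q) * (u ^ 4 + 1) +
          (q * (q + 1) ^ 2 * (q ^ 2 - 3 * q + 1)) * (u * (u ^ 2 + 1)) +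
          u ^ 2 * ((q ^ 2 + 1) ^ 3 - 4 * q * (q ^ 2 + 1) ^ 2 - 4 * q ^ 2 * (q ^ 2 + 1) + 22 * q ^ 3) := by
          ring
      _ = (q ^ 3 * (q + q⁻¹ - 1)) * (u ^ 2 * ((u + u⁻¹) ^ 2 - 2)) +
          (q ^ 3 * ((q + q⁻¹ + 2) * (q + q⁻¹ - 3))) * (u ^ 2 * (u + u⁻¹)) +
          u ^ 2 * (q ^ 3 * ((q + q⁻¹) ^ 3 - 4 * (q + q⁻¹) ^ 2 - 4 * (q + q⁻¹) + 22)) := by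
          rw [e1, e2, e3, e4, e5]
      _ = u ^ 2 * q ^ 3 * ((q + q⁻¹ - 1) * ((u + u⁻¹) ^ 2 - 2) +
          (q + q⁻¹ + 2) * (q + q⁻¹ - 3) * (u + u⁻¹) +
          (q + q⁻¹) ^ 3 - 4 * (q + q⁻¹) ^ 2 - 4 * (q + q⁻¹) + 22) := by ring
  rw [key, hCq, hCu]
  have hbr : (((2 * q.re : ℝ) : ℂ) - 1) * (((2 * u.re : ℝ) : ℂ) ^ 2 - 2) +
      (((2 * q.re : ℝ) : ℂ) + 2) * (((2 * q.re : ℝ) : ℂ) - 3) * ((2 * u.re : ℝ) : ℂ) +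
      ((2 * q.re : ℝ) : ℂ) ^ 3 - 4 * ((2 * q.re : ℝ) : ℂ) ^ 2 - 4 * ((2 * q.re : ℝ) : ℂ) + 22 =
      (((2 * q.re - 1) * ((2 * u.re) ^ 2 - 2) + (2 * q.re + 2) * (2 * q.re - 3) * (2 * u.re) +
        (2 * q.re) ^ 3 - 4 * (2 * q.re) ^ 2 - 4 * (2 * q.re) + 22 : ℝ) : ℂ) := by
    push_cast; ring
  rw [hbr]
  refine mul_ne_zero (mul_ne_zero (pow_ne_zero _ hu0) (pow_ne_zero _ hq0)) ?_
  rw [Complex.ofReal_ne_zero]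
  have := F_pos (2 * q.re) (2 * u.re) (by linarith) (by linarith) (by linarith) (by linarith)
  intro h
  rw [h] at this
  nlinarith [this]
end

section
/- For every natural number n ≥ 2 and every complex number q with |q| = 1 and q ≠ 1, if β_n(q) = 0 then |arg(q)| ≥ π − arccos(√2 − 1/2), where arg denotes the principal argument and β_n(q) = (q^{2n−1} + (q³−2q²−2q+1)q^{n−2} + 1)·(q^{2n+1} + (q³−2q²−2q+1)q^{n−1} + 1). -/
open Complex Real

private lemma pow_exp_re (t : ℝ) (m : ℕ) :
    ((Complex.exp (t * I)) ^ m).re = Real.cos (m * t) := by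
  rw [← Complex.exp_nat_mul]
  have : (m : ℂ) * (↑t * I) = ((m * t : ℝ) : ℂ) * I := by push_cast; ring
  rw [this, Complex.exp_ofReal_mul_I_re]

private lemma inv_pow_exp_re (t : ℝ) (m : ℕ) :
    (((Complex.exp (t * I)) ^ m)⁻¹).re = Real.cos (m * t) := by
  rw [← Complex.exp_nat_mul, ← Complex.exp_neg]
  have : -((m : ℂ) * (↑t * I)) = ((-(m * t) : ℝ) : ℂ) * I := by push_cast; ring
  rw [this, Complex.exp_ofReal_mul_I_re, Real.cos_neg]

private lemma key_cos (t : ℝ) (k : ℕ)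
    (hfac : (Complex.exp (t*I)^2) ^ (2*k+3) +
      ((Complex.exp (t*I)^2) ^ 3 - 2 * (Complex.exp (t*I)^2) ^ 2 - 2 * Complex.exp (t*I)^2 + 1) *
        (Complex.exp (t*I)^2) ^ k + 1 = 0) :
    Real.cos ((2*k+3) * t) = 2 * Real.cos t - Real.cos (3 * t) := by
  set u : ℂ := Complex.exp (t*I) with hu
  have hu0 : u ≠ 0 := Complex.exp_ne_zero _
  have hA : (u ^ (2*k+3) + (u ^ (2*k+3))⁻¹ + u ^ 3 + (u ^ 3)⁻¹ - 2*u - 2*u⁻¹) = 0 := by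
    have h2 : (u ^ (2*k+3) + (u ^ (2*k+3))⁻¹ + u ^ 3 + (u ^ 3)⁻¹ - 2*u - 2*u⁻¹) * u ^ (2*k+3)
        = (u ^ 2) ^ (2*k+3) + ((u ^ 2) ^ 3 - 2 * (u ^ 2) ^ 2 - 2 * u ^ 2 + 1) * (u ^ 2) ^ k + 1 := by
      have hp : u ^ (2*k+3) ≠ 0 := pow_ne_zero _ hu0
      have h3 : u ^ 3 ≠ 0 := pow_ne_zero _ hu0
      field_simp
      ring
    rw [hfac] at h2
    exact (mul_eq_zero.mp h2).resolve_right (pow_ne_zero _ hu0)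
  have e1 : (u ^ (2*k+3)).re = Real.cos ((2*k+3) * t) := by
    rw [hu, pow_exp_re]; norm_num
  have e2 : ((u ^ (2*k+3))⁻¹).re = Real.cos ((2*k+3) * t) := by
    rw [hu, inv_pow_exp_re]; norm_num
  have e3 : (u ^ 3).re = Real.cos (3 * t) := by
    rw [hu, pow_exp_re]; norm_num
  have e4 : ((u ^ 3)⁻¹).re = Real.cos (3 * t) := by
    rw [hu, inv_pow_exp_re]; norm_num
  have e5 : u.re = Real.cos t := by rw [hu, Complex.exp_ofReal_mul_I_re]
  have e6 : (u⁻¹).re = Real.cos t := by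
    rw [hu, ← pow_one (Complex.exp (↑t * I)), inv_pow_exp_re]; norm_num
  have hre := congrArg Complex.re hA
  simp only [Complex.add_re, Complex.sub_re, Complex.mul_re, Complex.zero_re,
    Complex.re_ofNat, Complex.im_ofNat, e1, e2, e3, e4, e5, e6] at hre
  norm_num at hre
  linarith [hre]

set_option maxHeartbeats 1000000 in
theorem beta_roots_on_unit_circle_arg (n : ℕ) (hn : 2 ≤ n) (q : ℂ)
    (hq : ‖q‖ = 1) (h1 : q ≠ 1)
    (hroot :
      (q ^ (2 * n - 1) + (q ^ 3 - 2 * q ^ 2 - 2 * q + 1) * q ^ (n - 2) + 1) *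
        (q ^ (2 * n + 1) + (q ^ 3 - 2 * q ^ 2 - 2 * q + 1) * q ^ (n - 1) + 1) = 0) :
    |Complex.arg q| ≥ Real.pi - Real.arccos (Real.sqrt 2 - 1 / 2) := by
  have hq' : q = Complex.exp ((q.arg : ℂ) * I) := by
    conv_lhs => rw [← Complex.norm_mul_exp_arg_mul_I q]
    rw [hq, Complex.ofReal_one, one_mul]
  set θ := q.arg with hθ
  set t : ℝ := θ / 2 with ht
  have hqu : q = Complex.exp ((t : ℂ) * I) ^ 2 := by
    rw [hq', sq, ← Complex.exp_add]
    congr 1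
    push_cast [ht]
    ring
  have hθpi : θ ≤ π := Complex.arg_le_pi q
  have hθnpi : -π < θ := Complex.neg_pi_lt_arg q
  have hθ0 : θ ≠ 0 := by
    intro h
    apply h1
    rw [hq', h]
    simp
  have hkey : ∃ k : ℕ, Real.cos ((2*k+3) * t) = 2 * Real.cos t - Real.cos (3 * t) := by
    rcases mul_eq_zero.mp hroot with h | h
    · have he : 2 * n - 1 = 2*(n-2)+3 := by omega
      rw [he, hqu] at h
      exact ⟨n - 2, key_cos t (n-2) h⟩
    · have he : 2 * n + 1 = 2*(n-1)+3 := by omega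
      rw [he, hqu] at h
      exact ⟨n - 1, key_cos t (n-1) h⟩
  obtain ⟨k, hk⟩ := hkey
  have hle : 2 * Real.cos t - Real.cos (3 * t) ≤ 1 := hk ▸ Real.cos_le_one _
  set c := Real.cos t with hc
  have h3t : Real.cos (3 * t) = 4 * c ^ 3 - 3 * c := Real.cos_three_mul t
  have h5 : 5 * c - 4 * c ^ 3 ≤ 1 := by rw [h3t] at hle; linarith
  have hpi : (0:ℝ) < π := Real.pi_pos
  have hc0 : 0 ≤ c := Real.cos_nonneg_of_mem_Icc ⟨by rw [ht]; linarith, by rw [ht]; linarith⟩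
  have htabs : |t| ≤ π := by
    rw [abs_le]; constructor <;> [rw [ht]; rw [ht]] <;> linarith
  have hc1 : c < 1 := by
    have h0m : (0:ℝ) ∈ Set.Icc 0 π := ⟨le_refl 0, le_of_lt hpi⟩
    have htm : |t| ∈ Set.Icc 0 π := ⟨abs_nonneg t, htabs⟩
    have ht0 : 0 < |t| := abs_pos.mpr (by rw [ht]; intro h; apply hθ0; field_simp at h; linarith)
    have := Real.strictAntiOn_cos h0m htm ht0
    rw [Real.cos_zero, Real.cos_abs] at this
    exact this
  have hquad : 4 * c ^ 2 + 4 * c - 1 ≤ 0 := by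
    by_contra hcon
    push_neg at hcon
    nlinarith [mul_pos (show (0:ℝ) < 1 - c by linarith) hcon]
  have hs2 : Real.sqrt 2 ^ 2 = 2 := Real.sq_sqrt (by norm_num)
  have hsn : 0 ≤ Real.sqrt 2 := Real.sqrt_nonneg 2
  have hs1 : 1 ≤ Real.sqrt 2 := by nlinarith
  have hcle : c ≤ (Real.sqrt 2 - 1) / 2 := by nlinarith
  set A := Real.arccos (Real.sqrt 2 - 1 / 2) with hA
  have hA1 : Real.cos A = Real.sqrt 2 - 1 / 2 :=
    Real.cos_arccos (by nlinarith) (by nlinarith)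
  have hA0 : 0 ≤ A := Real.arccos_nonneg _
  have hAπ : A ≤ π := Real.arccos_le_pi _
  have hsinA : Real.sin (A / 2) = (Real.sqrt 2 - 1) / 2 := by
    have hsq : Real.sin (A / 2) ^ 2 = 1 / 2 - Real.cos A / 2 := by
      have := Real.sin_sq_eq_half_sub (A / 2)
      rw [show 2 * (A / 2) = A by ring] at this
      linarith
    rw [hA1] at hsq
    have hsnn : 0 ≤ Real.sin (A / 2) :=
      Real.sin_nonneg_of_nonneg_of_le_pi (by linarith) (by linarith)
    nlinarith [sq_nonneg (Real.sin (A / 2) - (Real.sqrt 2 - 1) / 2),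
      sq_nonneg (Real.sin (A / 2) + (Real.sqrt 2 - 1) / 2)]
  have hcosπA : Real.cos ((π - A) / 2) = (Real.sqrt 2 - 1) / 2 := by
    rw [show (π - A) / 2 = π / 2 - A / 2 by ring, Real.cos_pi_div_two_sub, hsinA]
  by_contra hcon
  push_neg at hcon
  have hlt : (π - A) / 2 ∈ Set.Icc (0:ℝ) π := ⟨by linarith, by linarith⟩
  have habs : |θ| ≤ π := abs_le.mpr ⟨by linarith, hθpi⟩
  have hm : |θ| / 2 ∈ Set.Icc (0:ℝ) π := ⟨by positivity, by linarith⟩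
  have hmono := Real.strictAntiOn_cos hm hlt (by linarith)
  have heq : Real.cos (|θ| / 2) = c := by
    rw [hc, ht, show |θ| / 2 = |θ / 2| by rw [abs_div]; norm_num, Real.cos_abs]
  rw [heq, hcosπA] at hmono
  linarith
end

section
/- Let q be a nonzero complex number with principal argument arg(q) ∈ (−π/2, −3π/8). Then q²·√((q⁴ − 6q² + 1)/q⁴) = −√(q⁴ − 6q² + 1), where √ denotes the principal branch of the complex square root (the branch whose value has nonnegative real part, with the standard branch cut along the negative real axis). -/
open Complex Real

private lemma re_cpow_half_nonneg (w : ℂ) : 0 ≤ (w ^ ((1:ℂ)/2)).re := by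
  rcases eq_or_ne w 0 with h | h
  · simp [h, Complex.zero_cpow (by norm_num : (1:ℂ)/2 ≠ 0)]
  · rw [Complex.cpow_def_of_ne_zero h, Complex.exp_re]
    have him : (Complex.log w * ((1:ℂ)/2)).im = w.arg / 2 := by
      simp [Complex.mul_im, Complex.log_im, Complex.log_re]
      ring
    rw [him]
    refine mul_nonneg (Real.exp_pos _).le (Real.cos_nonneg_of_mem_Icc ⟨?_, ?_⟩)
    · have := Complex.neg_pi_lt_arg w; linarith
    · have := Complex.arg_le_pi w; have := Real.pi_pos; linarith

private lemma cpow_half_pos_of_im_pos {w : ℂ} (hw : 0 < w.im) :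
    0 < (w ^ ((1:ℂ)/2)).re ∧ 0 < (w ^ ((1:ℂ)/2)).im := by
  have hw0 : w ≠ 0 := by
    intro h; rw [h] at hw; simp at hw
  have harg0 : 0 < w.arg := by
    rcases lt_or_eq_of_le (Complex.arg_nonneg_iff.mpr hw.le) with h | h
    · exact h
    · exfalso
      have := (Complex.arg_eq_zero_iff).mp h.symm
      linarith [this.2]
  have hargpi : w.arg < Real.pi := by
    rcases lt_or_eq_of_le (Complex.arg_le_pi w) with h | h
    · exact h
    · exfalso
      have := (Complex.arg_eq_pi_iff).mp h
      linarith [this.2]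
  rw [Complex.cpow_def_of_ne_zero hw0, Complex.exp_re, Complex.exp_im]
  have him : (Complex.log w * ((1:ℂ)/2)).im = w.arg / 2 := by
    simp [Complex.mul_im, Complex.log_im, Complex.log_re]
    ring
  rw [him]
  constructor
  · exact mul_pos (Real.exp_pos _)
      (Real.cos_pos_of_mem_Ioo ⟨by linarith, by linarith⟩)
  · exact mul_pos (Real.exp_pos _)
      (Real.sin_pos_of_pos_of_lt_pi (by linarith) (by linarith [Real.pi_pos]))

private lemma sq_cpow_half {w : ℂ} (hw : w ≠ 0) : (w ^ ((1:ℂ)/2)) ^ 2 = w := by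
  rw [sq, ← Complex.cpow_add _ _ hw]
  norm_num

theorem sqrt_branch_identity (q : ℂ) (hq : q ≠ 0)
    (harg : Complex.arg q ∈ Set.Ioo (-(Real.pi / 2)) (-(3 * Real.pi / 8))) :
    q ^ 2 * ((q ^ 4 - 6 * q ^ 2 + 1) / q ^ 4) ^ ((1 : ℂ) / 2) =
      -((q ^ 4 - 6 * q ^ 2 + 1) ^ ((1 : ℂ) / 2)) := by
  obtain ⟨h1, h2⟩ := harg
  have hpi := Real.pi_pos
  -- basic position of q
  have hre : 0 < q.re := by
    have habs : |Complex.arg q| < Real.pi / 2 := by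
      rw [abs_lt]; constructor <;> [linarith; linarith]
    rcases Complex.abs_arg_lt_pi_div_two_iff.mp habs with h | h
    · exact h
    · exact absurd h hq
  have him : q.im < 0 := Complex.arg_neg_iff.mp (by linarith)
  -- q.im < -q.re, via sin of arg
  have habsq : 0 < ‖q‖ := norm_pos_iff.mpr hq
  have hsin : Real.sin (Complex.arg q) < Real.sin (-(3 * Real.pi / 8)) := by
    apply Real.strictMonoOn_sin ⟨by linarith, by linarith⟩ ⟨by linarith, by linarith⟩ h2
  have hsin38 : Real.sin (-(3 * Real.pi / 8)) < -(Real.sqrt 2 / 2) := by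
    rw [Real.sin_neg, neg_lt_neg_iff]
    have : Real.sin (Real.pi / 4) < Real.sin (3 * Real.pi / 8) :=
      Real.strictMonoOn_sin ⟨by linarith, by linarith⟩ ⟨by linarith, by linarith⟩
        (by linarith)
    rw [Real.sin_pi_div_four] at this
    linarith
  rw [Complex.sin_arg] at hsin
  have hsq2 : Real.sqrt 2 ^ 2 = 2 := Real.sq_sqrt (by norm_num)
  have hsq2pos : 0 < Real.sqrt 2 := Real.sqrt_pos.mpr (by norm_num)
  have hdiv : q.im / ‖q‖ < -(Real.sqrt 2 / 2) := lt_trans hsin hsin38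
  have himlt : q.im < -(Real.sqrt 2 / 2) * ‖q‖ := by
    rw [div_lt_iff₀ habsq] at hdiv; linarith
  have habs_sq : ‖q‖ ^ 2 = q.re ^ 2 + q.im ^ 2 := by
    rw [Complex.sq_norm, Complex.normSq_apply]; ring
  have hcpos : 0 < Real.sqrt 2 / 2 * ‖q‖ := by positivity
  have him2 : (Real.sqrt 2 / 2 * ‖q‖) ^ 2 < q.im ^ 2 := by
    nlinarith
  have hkey : q.re ^ 2 < q.im ^ 2 := by nlinarith
  -- components of q^2 and q^4
  have h2re : (q ^ 2).re = q.re ^ 2 - q.im ^ 2 := by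
    rw [sq, Complex.mul_re]; ring
  have h2im : (q ^ 2).im = 2 * q.re * q.im := by
    rw [sq, Complex.mul_im]; ring
  have hv_re : (q ^ 2).re < 0 := by rw [h2re]; linarith
  have hv_im : (q ^ 2).im < 0 := by rw [h2im]; nlinarith
  have h4 : (q ^ 4) = (q ^ 2) ^ 2 := by ring
  have h4im : (q ^ 4).im = 2 * (q ^ 2).re * (q ^ 2).im := by
    rw [h4, sq, Complex.mul_im]; ring
  set A : ℂ := q ^ 4 - 6 * q ^ 2 + 1 with hA
  have hAim : A.im = (q ^ 4).im - 6 * (q ^ 2).im := by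
    simp [hA, Complex.sub_im, Complex.add_im, Complex.mul_im]
  have hAimpos : 0 < A.im := by
    rw [hAim, h4im]; nlinarith
  have hA0 : A ≠ 0 := by
    intro h; rw [h] at hAimpos; simp at hAimpos
  have hq2 : (q ^ 2) ≠ 0 := pow_ne_zero 2 hq
  have hq4 : (q ^ 4) ≠ 0 := pow_ne_zero 4 hq
  set t : ℂ := A ^ ((1:ℂ)/2) with ht
  set m : ℂ := (A / q ^ 4) ^ ((1:ℂ)/2) with hm
  obtain ⟨htre, htim⟩ := cpow_half_pos_of_im_pos hAimpos
  have ht2 : t ^ 2 = A := sq_cpow_half hA0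
  have hs2 : (q ^ 2 * m) ^ 2 = A := by
    rw [mul_pow, sq_cpow_half (div_ne_zero hA0 hq4)]
    field_simp
  have hfac : (q ^ 2 * m - t) * (q ^ 2 * m + t) = 0 := by
    linear_combination hs2 - ht2
  rcases mul_eq_zero.mp hfac with h | h
  · -- contradiction case: q^2 * m = t
    exfalso
    have hmt : m = t / q ^ 2 := by
      field_simp
      linear_combination h
    have hmre : 0 ≤ m.re := re_cpow_half_nonneg _
    rw [hmt, Complex.div_re] at hmre
    have hns : 0 < Complex.normSq (q ^ 2) := Complex.normSq_pos.mpr hq2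
    have hn1 : t.re * (q ^ 2).re / Complex.normSq (q ^ 2) < 0 :=
      div_neg_of_neg_of_pos (mul_neg_of_pos_of_neg htre hv_re) hns
    have hn2 : t.im * (q ^ 2).im / Complex.normSq (q ^ 2) < 0 :=
      div_neg_of_neg_of_pos (mul_neg_of_pos_of_neg htim hv_im) hns
    linarith
  · linear_combination h
end

section
/- Let q be a complex number with q ≠ 0 and q² ≠ 1, let b₀ ∈ ℂ, and let a, b : ℕ → ℂ be sequences with a(0) = 1, b(0) = b₀, satisfying for all n ≥ 1 the coupled recurrences a(n) = (q + 1/q)·b(n−1) − a(n−1) − 1 and b(n) = (q + 1/q)·a(n) − b(n−1). Then for all n ≥ 0: a(n) = ( (q^{4n+3} − q^{4n+1} − q³ + q)·b₀ − 2q^{4n+2} + q^{4n} + 2q^{2n+2} + q⁴ − 2q² ) / ( q^{2n}·(q² − 1)² ) and b(n) = ( (q^{4n+4} − q^{4n+2} − q² + 1)·b₀ − 2q^{4n+3} + q^{4n+1} + q^{2n+3} + q^{2n+1} + q³ − 2q ) / ( q^{2n}·(q² − 1)² ). -/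
theorem asymmetric_coupled_recurrence_closed_form (q : ℂ) (hq : q ≠ 0)
    (hq2 : q ^ 2 ≠ 1) (b₀ : ℂ) (a b : ℕ → ℂ) (ha0 : a 0 = 1) (hb0 : b 0 = b₀)
    (hreca : ∀ n : ℕ, a (n + 1) = (q + 1 / q) * b n - a n - 1)
    (hrecb : ∀ n : ℕ, b (n + 1) = (q + 1 / q) * a (n + 1) - b n) :
    ∀ n : ℕ,
      a n = ((q ^ (4 * n + 3) - q ^ (4 * n + 1) - q ^ 3 + q) * b₀ -
            2 * q ^ (4 * n + 2) + q ^ (4 * n) + 2 * q ^ (2 * n + 2) +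
            q ^ 4 - 2 * q ^ 2) /
          (q ^ (2 * n) * (q ^ 2 - 1) ^ 2) ∧
      b n = ((q ^ (4 * n + 4) - q ^ (4 * n + 2) - q ^ 2 + 1) * b₀ -
            2 * q ^ (4 * n + 3) + q ^ (4 * n + 1) + q ^ (2 * n + 3) +
            q ^ (2 * n + 1) + q ^ 3 - 2 * q) /
          (q ^ (2 * n) * (q ^ 2 - 1) ^ 2) := by
  have hd : (q ^ 2 - 1) ≠ 0 := sub_ne_zero.mpr hq2
  intro n
  induction n with
  | zero =>
    constructor
    · rw [ha0]; field_simp; ring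
    · rw [hb0]; field_simp; ring
  | succ n ih =>
    obtain ⟨iha, ihb⟩ := ih
    set X := q ^ n with hX
    have hXne : X ≠ 0 := pow_ne_zero _ hq
    have h2 : (q ^ 2) ^ n = X ^ 2 := by rw [hX, ← pow_mul, ← pow_mul, mul_comm]
    have h4 : (q ^ 4) ^ n = X ^ 4 := by rw [hX, ← pow_mul, ← pow_mul, mul_comm]
    simp only [pow_add, pow_mul, pow_one] at iha ihb ⊢
    rw [h2, h4] at iha ihb
    rw [h2, h4]
    clear_value X
    have hD : X ^ 2 * (q ^ 2 - 1) ^ 2 ≠ 0 :=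
      mul_ne_zero (pow_ne_zero _ hXne) (pow_ne_zero _ hd)
    have hD' : X ^ 2 * q ^ 2 * (q ^ 2 - 1) ^ 2 ≠ 0 :=
      mul_ne_zero (mul_ne_zero (pow_ne_zero _ hXne) (pow_ne_zero _ hq)) (pow_ne_zero _ hd)
    rw [eq_div_iff hD] at iha ihb
    have hq1 : q * (1 / q) = 1 := mul_one_div_cancel hq
    have hA : a (n + 1) * (X ^ 2 * q ^ 2 * (q ^ 2 - 1) ^ 2) =
        (X ^ 4 * q ^ 4 * q ^ 3 - X ^ 4 * q ^ 4 * q - q ^ 3 + q) * b₀ -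
          2 * (X ^ 4 * q ^ 4 * q ^ 2) + X ^ 4 * q ^ 4 + 2 * (X ^ 2 * q ^ 2 * q ^ 2) +
          q ^ 4 - 2 * q ^ 2 := by
      have e : ((q + 1 / q) * b n - a n - 1) * (X ^ 2 * q ^ 2 * (q ^ 2 - 1) ^ 2)
          = (b n * (X ^ 2 * (q ^ 2 - 1) ^ 2)) * (q ^ 3 + (q * (1 / q)) * q)
            - (a n * (X ^ 2 * (q ^ 2 - 1) ^ 2)) * q ^ 2
            - X ^ 2 * q ^ 2 * (q ^ 2 - 1) ^ 2 := by ring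
      rw [hreca, e, hq1, iha, ihb]
      ring
    have hB : b (n + 1) * (X ^ 2 * q ^ 2 * (q ^ 2 - 1) ^ 2) * q =
        ((X ^ 4 * q ^ 4 * q ^ 4 - X ^ 4 * q ^ 4 * q ^ 2 - q ^ 2 + 1) * b₀ -
          2 * (X ^ 4 * q ^ 4 * q ^ 3) + X ^ 4 * q ^ 4 * q + X ^ 2 * q ^ 2 * q ^ 3 +
          X ^ 2 * q ^ 2 * q + q ^ 3 - 2 * q) * q := by
      have e : ((q + 1 / q) * a (n + 1) - b n) * (X ^ 2 * q ^ 2 * (q ^ 2 - 1) ^ 2) * q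
          = (a (n + 1) * (X ^ 2 * q ^ 2 * (q ^ 2 - 1) ^ 2)) * (q ^ 2 + q * (1 / q))
            - (b n * (X ^ 2 * (q ^ 2 - 1) ^ 2)) * q ^ 3 := by ring
      rw [hrecb, e, hq1, hA, ihb]
      ring
    refine ⟨?_, ?_⟩
    · rw [eq_div_iff hD']; exact hA
    · rw [eq_div_iff hD']; exact mul_right_cancel₀ hq hB
end

section
/- For every natural number n ≥ 1 there exists a real number r with 1 < r < 2 such that, writing R = r^n, 4R⁴r² + 4r² − 4R²r² + R⁴r⁴ + R⁴ + r⁴ + 1 + (r² + 1 − R⁴ − R⁴r²)·√(1 + 10r² + r⁴) = 0, where √ denotes the real square root. -/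
theorem modelE_imaginary_pole (n : ℕ) (hn : 1 ≤ n) :
    ∃ r : ℝ, 1 < r ∧ r < 2 ∧
      4 * (r ^ n) ^ 4 * r ^ 2 + 4 * r ^ 2 - 4 * (r ^ n) ^ 2 * r ^ 2 +
          (r ^ n) ^ 4 * r ^ 4 + (r ^ n) ^ 4 + r ^ 4 + 1 +
          (r ^ 2 + 1 - (r ^ n) ^ 4 - (r ^ n) ^ 4 * r ^ 2) *
            Real.sqrt (1 + 10 * r ^ 2 + r ^ 4) = 0 := by
  set f : ℝ → ℝ := fun r =>
      4 * (r ^ n) ^ 4 * r ^ 2 + 4 * r ^ 2 - 4 * (r ^ n) ^ 2 * r ^ 2 +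
          (r ^ n) ^ 4 * r ^ 4 + (r ^ n) ^ 4 + r ^ 4 + 1 +
          (r ^ 2 + 1 - (r ^ n) ^ 4 - (r ^ n) ^ 4 * r ^ 2) *
            Real.sqrt (1 + 10 * r ^ 2 + r ^ 4) with hf
  have hc : ContinuousOn f (Set.Icc (1:ℝ) 2) := by
    apply Continuous.continuousOn
    fun_prop
  have hf1 : f 1 = 8 := by
    simp [hf]
    norm_num
  have hf2 : f 2 < 0 := by
    have hs1 : (7.5 : ℝ) ≤ Real.sqrt 57 := by
      rw [show (7.5:ℝ) = Real.sqrt (7.5^2) by rw [Real.sqrt_sq]; norm_num]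
      exact Real.sqrt_le_sqrt (by norm_num)
    have hs2 : Real.sqrt 57 ≤ 8 := by
      rw [show (8:ℝ) = Real.sqrt (8^2) by rw [Real.sqrt_sq]; norm_num]
      exact Real.sqrt_le_sqrt (by norm_num)
    have hR : (2:ℝ) ≤ 2 ^ n := by
      calc (2:ℝ) = 2 ^ 1 := (pow_one 2).symm
      _ ≤ 2 ^ n := pow_le_pow_right₀ one_le_two hn
    have h57 : (1:ℝ) + 10 * 2 ^ 2 + 2 ^ 4 = 57 := by norm_num
    simp only [hf]
    rw [h57]
    have hR2 : (4:ℝ) ≤ ((2:ℝ)^n)^2 := by nlinarith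
    have hR4 : (16:ℝ) ≤ ((2:ℝ)^n)^4 := by nlinarith
    nlinarith [mul_nonneg (sub_nonneg.2 hs1) (sub_nonneg.2 hR4)]
  have h0 : (0:ℝ) ∈ Set.Ioo (f 2) (f 1) := by
    constructor
    · exact hf2
    · rw [hf1]; norm_num
  have := intermediate_value_Ioo' (by norm_num : (1:ℝ) ≤ 2) hc h0
  obtain ⟨r, hr, hfr⟩ := this
  exact ⟨r, hr.1, hr.2, hfr⟩
end
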